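/- arXiv:0907.2508 — 4 statements merged into one kernel-verified Lean document; each statement's English description precedes it below -/
import Mathlib

section
/- Let (F,‖·‖) be a normed real vector space, (Ω,𝓕,P) a probability space, and let Jⁿ (n∈ℕ) and J be linear maps from F into the space of real-valued random variables on Ω. Assume there is a constant C>0 such that for all f∈F, sup_{n≥1} E|Jⁿ(f)| ≤ C‖f‖ and E|J(f)| ≤ C‖f‖, and assume that for some dense subspace D of F, Jⁿ(f) converges in distribution to J(f) as n→∞ for every f∈D. Then Jⁿ(f) converges in distribution to J(f) for every f∈F. -/
open MeasureTheory Filter Topology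

section KyFan
open Metric ENNReal
/-- Ky Fan type bound: if `E|X - Y| ≤ a` then the Lévy-Prokhorov distance between the laws of
`X` and `Y` is at most `√a`. -/
lemma levyProkhorovEDist_map_le_sqrt {Ω : Type*} [MeasurableSpace Ω] (P : Measure Ω)
    [IsProbabilityMeasure P] {X Y : Ω → ℝ} (hX : AEMeasurable X P) (hY : AEMeasurable Y P)
    {a : ℝ} (ha : 0 ≤ a)
    (h : ∫⁻ ω, ENNReal.ofReal |X ω - Y ω| ∂P ≤ ENNReal.ofReal a) :
    levyProkhorovEDist (P.map X) (P.map Y) ≤ ENNReal.ofReal (Real.sqrt a) := by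
  have : IsProbabilityMeasure (P.map X) := Measure.isProbabilityMeasure_map hX
  have : IsProbabilityMeasure (P.map Y) := Measure.isProbabilityMeasure_map hY
  apply levyProkhorovEDist_le_of_forall_le
  intro ε B hδε hεtop hB
  have hε0 : ε ≠ 0 := (lt_of_le_of_lt zero_le hδε).ne'
  have hεt : ENNReal.ofReal ε.toReal = ε := ENNReal.ofReal_toReal hεtop.ne
  have hεpos : 0 < ε.toReal := toReal_pos hε0 hεtop.ne
  rw [Measure.map_apply_of_aemeasurable hX hB,
      Measure.map_apply_of_aemeasurable hY isOpen_thickening.measurableSet]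
  have hsub : X ⁻¹' B ⊆ (Y ⁻¹' thickening ε.toReal B) ∪
      {ω | ε ≤ ENNReal.ofReal |X ω - Y ω|} := by
    intro ω hω
    by_cases hd : |X ω - Y ω| < ε.toReal
    · left
      exact Metric.mem_thickening_iff.mpr ⟨X ω, hω, by
        rw [Real.dist_eq, abs_sub_comm]; exact hd⟩
    · right
      show ε ≤ ENNReal.ofReal |X ω - Y ω|
      rw [← hεt]
      exact ENNReal.ofReal_le_ofReal (not_lt.mp hd)
  calc P (X ⁻¹' B) ≤ P (Y ⁻¹' thickening ε.toReal B) + P {ω | ε ≤ ENNReal.ofReal |X ω - Y ω|} :=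
        (measure_mono hsub).trans (measure_union_le _ _)
    _ ≤ P (Y ⁻¹' thickening ε.toReal B) + ε := by
        gcongr
        have hmarkov := mul_meas_ge_le_lintegral₀
          (μ := P) (f := fun ω => ENNReal.ofReal |X ω - Y ω|)
          (measurable_ofReal.comp_aemeasurable (measurable_abs.comp_aemeasurable (hX.sub hY))) ε
        have h2 : ε * P {ω | ε ≤ ENNReal.ofReal |X ω - Y ω|} ≤ ε * ε := by
          refine hmarkov.trans (h.trans ?_)
          have : ENNReal.ofReal a = ENNReal.ofReal (Real.sqrt a) * ENNReal.ofReal (Real.sqrt a) := by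
            rw [← ENNReal.ofReal_mul (Real.sqrt_nonneg a), Real.mul_self_sqrt ha]
          rw [this]
          exact mul_le_mul' hδε.le hδε.le
        exact ENNReal.le_of_forall_pos_le_add fun r hr _ => by
          have := (ENNReal.mul_le_mul_iff_right hε0 hεtop.ne).mp h2
          exact this.trans (le_self_add)
end KyFan

/-- Let `F` be a normed real vector space, `(Ω, 𝓕, P)` a probability space, and
`Jⁿ` (`n ∈ ℕ`) and `J` linear maps from `F` into real random variables on `Ω`.
If `sup_n E|Jⁿ(f)| ≤ C‖f‖` and `E|J(f)| ≤ C‖f‖` for all `f ∈ F`, and `Jⁿ(f)`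
converges in distribution to `J(f)` for all `f` in a dense subspace `D ⊆ F`,
then `Jⁿ(f)` converges in distribution to `J(f)` for every `f ∈ F`.
Convergence in distribution is expressed by convergence of expectations of
bounded continuous functions. -/
theorem weak_convergence_dense_subspace
    {F : Type*} [NormedAddCommGroup F] [NormedSpace ℝ F]
    {Ω : Type*} [MeasurableSpace Ω] (P : Measure Ω) [IsProbabilityMeasure P]
    (J : ℕ → F →ₗ[ℝ] Ω → ℝ) (Jlim : F →ₗ[ℝ] Ω → ℝ)
    (hJmeas : ∀ n f, AEMeasurable (J n f) P) (hJlimMeas : ∀ f, AEMeasurable (Jlim f) P)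
    (C : ℝ) (hC : 0 < C)
    (hJbound : ∀ (n : ℕ) (f : F),
      ∫⁻ ω, ENNReal.ofReal |J n f ω| ∂P ≤ ENNReal.ofReal (C * ‖f‖))
    (hJlimBound : ∀ f : F,
      ∫⁻ ω, ENNReal.ofReal |Jlim f ω| ∂P ≤ ENNReal.ofReal (C * ‖f‖))
    (D : Subspace ℝ F) (hD : Dense (D : Set F))
    (hconv : ∀ f ∈ D, ∀ φ : BoundedContinuousFunction ℝ ℝ,
      Tendsto (fun n => ∫ ω, φ (J n f ω) ∂P) atTop (𝓝 (∫ ω, φ (Jlim f ω) ∂P))) :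
    ∀ f : F, ∀ φ : BoundedContinuousFunction ℝ ℝ,
      Tendsto (fun n => ∫ ω, φ (J n f ω) ∂P) atTop (𝓝 (∫ ω, φ (Jlim f ω) ∂P)) := by
  intro f
  -- package laws as probability measures
  set μ : ℕ → ProbabilityMeasure ℝ :=
    fun n => ⟨P.map (J n f), Measure.isProbabilityMeasure_map (hJmeas n f)⟩ with hμ
  set ν : ProbabilityMeasure ℝ := ⟨P.map (Jlim f), Measure.isProbabilityMeasure_map (hJlimMeas f)⟩ with hν
  have key : Tendsto μ atTop (𝓝 ν) := by
    -- work in the Lévy-Prokhorov metric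
    let H := LevyProkhorov.probabilityMeasureHomeomorph (Ω := ℝ)
    suffices h : Tendsto (fun n => H (μ n)) atTop (𝓝 (H ν)) by
      have := (H.symm.continuous.tendsto (H ν)).comp h
      simpa [Function.comp_def, Homeomorph.symm_apply_apply] using this
    rw [Metric.tendsto_atTop]
    intro ε hε
    -- choose a good approximation g ∈ D of f
    obtain ⟨g, hgD, hgf⟩ : ∃ g ∈ (D : Set F), dist f g < (ε / 4) ^ 2 / C :=
      Metric.mem_closure_iff.mp (hD f) _ (by positivity)
    rw [dist_eq_norm] at hgf
    have hCfg : C * ‖f - g‖ < (ε / 4) ^ 2 := by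
      rw [lt_div_iff₀ hC] at hgf; nlinarith
    have hsqrt : Real.sqrt (C * ‖f - g‖) < ε / 4 :=
      (Real.sqrt_lt' (by positivity)).mpr hCfg
    -- uniform closeness of laws of J n f and J n g (Ky Fan / Markov)
    have hdist : ∀ n : ℕ, dist (H (μ n)) (H (⟨P.map (J n g),
        Measure.isProbabilityMeasure_map (hJmeas n g)⟩ : ProbabilityMeasure ℝ)) ≤
          Real.sqrt (C * ‖f - g‖) := by
      intro n
      refine ENNReal.toReal_le_of_le_ofReal (Real.sqrt_nonneg _) ?_
      refine levyProkhorovEDist_map_le_sqrt P (hJmeas n f) (hJmeas n g) (by positivity) ?_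
      have hfg : (fun ω => J n f ω - J n g ω) = J n (f - g) := by
        rw [map_sub]; rfl
      simpa [hfg] using hJbound n (f - g)
    have hdistLim : dist (H ν) (H (⟨P.map (Jlim g),
        Measure.isProbabilityMeasure_map (hJlimMeas g)⟩ : ProbabilityMeasure ℝ)) ≤
          Real.sqrt (C * ‖f - g‖) := by
      refine ENNReal.toReal_le_of_le_ofReal (Real.sqrt_nonneg _) ?_
      refine levyProkhorovEDist_map_le_sqrt P (hJlimMeas f) (hJlimMeas g) (by positivity) ?_
      have hfg : (fun ω => Jlim f ω - Jlim g ω) = Jlim (f - g) := by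
        rw [map_sub]; rfl
      simpa [hfg] using hJlimBound (f - g)
    -- convergence for g
    set μ' : ℕ → ProbabilityMeasure ℝ :=
      fun n => ⟨P.map (J n g), Measure.isProbabilityMeasure_map (hJmeas n g)⟩ with hμ'
    set ν' : ProbabilityMeasure ℝ :=
      ⟨P.map (Jlim g), Measure.isProbabilityMeasure_map (hJlimMeas g)⟩ with hν'
    have hg_tend : Tendsto μ' atTop (𝓝 ν') := by
      rw [ProbabilityMeasure.tendsto_iff_forall_integral_tendsto]
      intro φ
      have h1 : ∀ n, ∫ x, φ x ∂(μ' n : Measure ℝ) = ∫ ω, φ (J n g ω) ∂P := fun n =>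
        integral_map (hJmeas n g) φ.continuous.aestronglyMeasurable
      have h2 : ∫ x, φ x ∂(ν' : Measure ℝ) = ∫ ω, φ (Jlim g ω) ∂P :=
        integral_map (hJlimMeas g) φ.continuous.aestronglyMeasurable
      simpa [h1, h2] using hconv g hgD φ
    have hg_tend' : Tendsto (fun n => H (μ' n)) atTop (𝓝 (H ν')) :=
      (H.continuous.tendsto ν').comp hg_tend
    obtain ⟨N, hN⟩ := (Metric.tendsto_atTop.mp hg_tend') (ε / 4) (by positivity)
    refine ⟨N, fun n hn => ?_⟩
    have t1 := hdist n
    have t2 := hN n hn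
    have t3 := hdistLim
    calc dist (H (μ n)) (H ν)
        ≤ dist (H (μ n)) (H (μ' n)) + dist (H (μ' n)) (H ν') + dist (H ν') (H ν) :=
          dist_triangle4 _ _ _ _
      _ < ε := by
          rw [dist_comm (H ν') (H ν)] at *
          linarith
  intro φ
  have := ProbabilityMeasure.tendsto_iff_forall_integral_tendsto.mp key φ
  have h1 : ∀ n, ∫ x, φ x ∂(μ n : Measure ℝ) = ∫ ω, φ (J n f ω) ∂P := fun n =>
    integral_map (hJmeas n f) φ.continuous.aestronglyMeasurable
  have h2 : ∫ x, φ x ∂(ν : Measure ℝ) = ∫ ω, φ (Jlim f ω) ∂P :=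
    integral_map (hJlimMeas f) φ.continuous.aestronglyMeasurable
  simpa [h1, h2] using this
end

section
/- Let N be a standard Poisson process on the plane. Then for all 0≤s≤t and all x,y≥0, E[(−1)^{N(s,y)+N(t,x)}] = exp(−2[(t−s)x + |x−y|·s]). -/
open MeasureTheory ProbabilityTheory

/-- The rectangular increment of a plane process over `(s,t] × (y,x]`, as an integer. -/
def planeInc (N : ℝ → ℝ → ℕ) (s t y x : ℝ) : ℤ :=
  (N t x : ℤ) - (N s x : ℤ) - (N t y : ℤ) + (N s y : ℤ)

/-- `N` is a standard Poisson process on the plane: it vanishes on the axes, its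
increments over rectangles `(s,t] × (y,x]` are Poisson distributed with parameter
`(t−s)(x−y)`, and increments over pairwise disjoint rectangles are mutually
independent. -/
structure IsStdPlanePoisson {Ω : Type*} [MeasurableSpace Ω] (P : Measure Ω)
    (N : Ω → ℝ → ℝ → ℕ) : Prop where
  zero_left : ∀ ω x, N ω 0 x = 0
  zero_right : ∀ ω t, N ω t 0 = 0
  measurable : ∀ t x, Measurable fun ω => N ω t x
  poisson_law : ∀ s t y x : ℝ, 0 ≤ s → s < t → 0 ≤ y → y < x → ∀ k : ℕ,
    P {ω | planeInc (N ω) s t y x = (k : ℤ)} =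
      ENNReal.ofReal (Real.exp (-((t - s) * (x - y))) * ((t - s) * (x - y)) ^ k /
        (Nat.factorial k))
  indep : ∀ (M : ℕ) (s t y x : Fin M → ℝ), (∀ i, 0 ≤ s i) → (∀ i, s i < t i) →
    (∀ i, 0 ≤ y i) → (∀ i, y i < x i) →
    (Set.univ : Set (Fin M)).Pairwise (fun i j => Disjoint
      (Set.Ioc (s i) (t i) ×ˢ Set.Ioc (y i) (x i))
      (Set.Ioc (s j) (t j) ×ˢ Set.Ioc (y j) (x j))) →
    iIndepFun (m := fun _ => inferInstance)
      (fun i ω => planeInc (N ω) (s i) (t i) (y i) (x i)) P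

/-- The Kac–Stroock processes `θ_n(t,x) = n √(tx) (−1)^{N(√n t, √n x)}`. -/
noncomputable def kacStroock {Ω : Type*} (N : Ω → ℝ → ℝ → ℕ) (n : ℕ) (ω : Ω) (t x : ℝ) : ℝ :=
  (n : ℝ) * Real.sqrt (t * x) * (-1 : ℝ) ^ (N ω (Real.sqrt n * t) (Real.sqrt n * x))

section Aux

variable {Ω : Type*} [MeasurableSpace Ω] (P : Measure Ω) [IsProbabilityMeasure P]

lemma negOnePow_int_measurable : Measurable (fun k : ℤ => (-1 : ℝ) ^ k) :=
  measurable_from_top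

lemma planeInc_measurable (N : Ω → ℝ → ℝ → ℕ) (hN : IsStdPlanePoisson P N) (s t y x : ℝ) :
    Measurable fun ω => planeInc (N ω) s t y x := by
  simp only [planeInc]
  exact (((measurable_from_top.comp (hN.measurable t x)).sub
    (measurable_from_top.comp (hN.measurable s x))).sub
    (measurable_from_top.comp (hN.measurable t y))).add
    (measurable_from_top.comp (hN.measurable s y))

/-- If `Z` has a Poisson law with parameter `l`, then `E[(-1)^Z] = exp(-2l)`. -/
lemma poisson_parity_integral (Z : Ω → ℤ) (hZ : Measurable Z) (l : ℝ) (hl : 0 ≤ l)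
    (hlaw : ∀ k : ℕ, P {ω | Z ω = (k : ℤ)} =
      ENNReal.ofReal (Real.exp (-l) * l ^ k / (Nat.factorial k))) :
    ∫ ω, (-1 : ℝ) ^ (Z ω) ∂P = Real.exp (-2 * l) := by
  set μ := Measure.map Z P with hμdef
  haveI : IsProbabilityMeasure μ := Measure.isProbabilityMeasure_map hZ.aemeasurable
  have hpmf_nonneg : ∀ k : ℕ, 0 ≤ Real.exp (-l) * l ^ k / (Nat.factorial k) := by
    intro k; positivity
  have hμk : ∀ k : ℕ, μ {(k : ℤ)} =
      ENNReal.ofReal (Real.exp (-l) * l ^ k / (Nat.factorial k)) := by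
    intro k
    rw [hμdef, Measure.map_apply hZ (measurableSet_singleton _)]
    exact hlaw k
  have hsummable : Summable (fun k : ℕ => Real.exp (-l) * l ^ k / (Nat.factorial k)) := by
    have := (Real.summable_pow_div_factorial l).mul_left (Real.exp (-l))
    simpa [mul_div_assoc] using this
  have hexp : ∀ u : ℝ, ∑' n : ℕ, u ^ n / (Nat.factorial n) = Real.exp u := by
    intro u
    rw [Real.exp_eq_exp_ℝ, NormedSpace.exp_eq_tsum_div]
  have htsum : ∑' k : ℕ, (Real.exp (-l) * l ^ k / (Nat.factorial k)) = 1 := by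
    calc ∑' k : ℕ, (Real.exp (-l) * l ^ k / (Nat.factorial k))
        = ∑' k : ℕ, Real.exp (-l) * (l ^ k / (Nat.factorial k)) := by
          apply tsum_congr; intro k; ring
      _ = Real.exp (-l) * ∑' k : ℕ, (l ^ k / (Nat.factorial k)) := tsum_mul_left
      _ = Real.exp (-l) * Real.exp l := by rw [hexp]
      _ = 1 := by rw [← Real.exp_add]; simp
  have hrange : μ (Set.range ((↑) : ℕ → ℤ)) = 1 := by
    have hiU : Set.range ((↑) : ℕ → ℤ) = ⋃ n : ℕ, {(n : ℤ)} := by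
      ext k; simp
    rw [hiU, measure_iUnion ?_ (fun n => measurableSet_singleton _)]
    · calc ∑' n : ℕ, μ {(n : ℤ)}
          = ∑' n : ℕ, ENNReal.ofReal (Real.exp (-l) * l ^ n / (Nat.factorial n)) := by
            apply tsum_congr; intro n; exact hμk n
        _ = ENNReal.ofReal (∑' n : ℕ, (Real.exp (-l) * l ^ n / (Nat.factorial n))) :=
            (ENNReal.ofReal_tsum_of_nonneg hpmf_nonneg hsummable).symm
        _ = 1 := by rw [htsum]; simp
    · intro m n hmn
      simp only [Set.disjoint_singleton]
      exact_mod_cast hmn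
  have hnull : ∀ k : ℤ, k ∉ Set.range ((↑) : ℕ → ℤ) → μ {k} = 0 := by
    intro k hk
    have hcompl : μ (Set.range ((↑) : ℕ → ℤ))ᶜ = 0 := by
      rw [measure_compl (Set.countable_range _).measurableSet (measure_ne_top _ _), hrange]
      simp
    exact measure_mono_null (Set.singleton_subset_iff.2 hk) hcompl
  have hint : Integrable (fun k : ℤ => (-1 : ℝ) ^ k) μ := by
    refine ⟨negOnePow_int_measurable.aestronglyMeasurable, ?_⟩
    apply HasFiniteIntegral.of_bounded (C := 1)
    filter_upwards with k
    rw [norm_zpow, norm_neg, norm_one, one_zpow]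
  calc ∫ ω, (-1 : ℝ) ^ (Z ω) ∂P
      = ∫ k, (-1 : ℝ) ^ k ∂μ := (integral_map hZ.aemeasurable hint.1).symm
    _ = ∑' k : ℤ, (μ {k}).toReal • (-1 : ℝ) ^ k := integral_countable' hint
    _ = ∑' n : ℕ, (μ {((n : ℕ) : ℤ)}).toReal • (-1 : ℝ) ^ ((n : ℕ) : ℤ) := by
        refine (Function.Injective.tsum_eq (fun a b h => by exact_mod_cast h) ?_).symm
        intro k hk
        by_contra hk'
        simp only [Function.mem_support, ne_eq] at hk
        exact hk (by simp [hnull k hk'])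
    _ = ∑' n : ℕ, Real.exp (-l) * ((-l) ^ n / (Nat.factorial n)) := by
        apply tsum_congr; intro n
        rw [hμk n, ENNReal.toReal_ofReal (hpmf_nonneg n), smul_eq_mul, zpow_natCast, neg_pow]
        ring
    _ = Real.exp (-l) * Real.exp (-l) := by rw [tsum_mul_left, hexp]
    _ = Real.exp (-2 * l) := by rw [← Real.exp_add]; ring_nf

/-- `E[(-1)^{planeInc}] = exp(-2(t-s)(x-y))` for `0 ≤ s ≤ t`, `0 ≤ y ≤ x`. -/
lemma planeInc_parity_integral (N : Ω → ℝ → ℝ → ℕ) (hN : IsStdPlanePoisson P N)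
    (s t y x : ℝ) (hs : 0 ≤ s) (hst : s ≤ t) (hy : 0 ≤ y) (hyx : y ≤ x) :
    ∫ ω, (-1 : ℝ) ^ (planeInc (N ω) s t y x) ∂P =
      Real.exp (-2 * ((t - s) * (x - y))) := by
  rcases eq_or_lt_of_le hst with h | h
  · subst h
    have hz : ∀ ω, planeInc (N ω) s s y x = 0 := by intro ω; simp [planeInc]
    simp [hz]
  rcases eq_or_lt_of_le hyx with h2 | h2
  · subst h2
    have hz : ∀ ω, planeInc (N ω) s t y y = 0 := by intro ω; simp [planeInc]
    simp [hz]
  · exact poisson_parity_integral P _ (planeInc_measurable P N hN s t y x) _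
      (mul_nonneg (sub_nonneg.2 hst) (sub_nonneg.2 hyx))
      (fun k => hN.poisson_law s t y x hs h hy h2 k)

/-- Product formula over two disjoint (possibly degenerate) rectangles. -/
lemma planeInc_parity_integral_mul (N : Ω → ℝ → ℝ → ℕ) (hN : IsStdPlanePoisson P N)
    (s1 t1 y1 x1 s2 t2 y2 x2 : ℝ)
    (hs1 : 0 ≤ s1) (hst1 : s1 ≤ t1) (hy1 : 0 ≤ y1) (hyx1 : y1 ≤ x1)
    (hs2 : 0 ≤ s2) (hst2 : s2 ≤ t2) (hy2 : 0 ≤ y2) (hyx2 : y2 ≤ x2)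
    (hdisj : Disjoint (Set.Ioc s1 t1 ×ˢ Set.Ioc y1 x1) (Set.Ioc s2 t2 ×ˢ Set.Ioc y2 x2)) :
    ∫ ω, (-1 : ℝ) ^ (planeInc (N ω) s1 t1 y1 x1) * (-1 : ℝ) ^ (planeInc (N ω) s2 t2 y2 x2) ∂P
      = Real.exp (-2 * ((t1 - s1) * (x1 - y1))) * Real.exp (-2 * ((t2 - s2) * (x2 - y2))) := by
  by_cases hd1 : s1 = t1 ∨ y1 = x1
  · have hz : ∀ ω, planeInc (N ω) s1 t1 y1 x1 = 0 := by
      intro ω; rcases hd1 with h | h <;> (subst h; simp [planeInc])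
    have hl0 : (t1 - s1) * (x1 - y1) = 0 := by
      rcases hd1 with h | h <;> simp [h]
    simp only [hz, zpow_zero, one_mul, hl0]
    rw [planeInc_parity_integral P N hN s2 t2 y2 x2 hs2 hst2 hy2 hyx2]
    simp
  by_cases hd2 : s2 = t2 ∨ y2 = x2
  · have hz : ∀ ω, planeInc (N ω) s2 t2 y2 x2 = 0 := by
      intro ω; rcases hd2 with h | h <;> (subst h; simp [planeInc])
    have hl0 : (t2 - s2) * (x2 - y2) = 0 := by
      rcases hd2 with h | h <;> simp [h]
    simp only [hz, zpow_zero, mul_one, hl0]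
    rw [planeInc_parity_integral P N hN s1 t1 y1 x1 hs1 hst1 hy1 hyx1]
    simp
  · push_neg at hd1 hd2
    have h1 : s1 < t1 := lt_of_le_of_ne hst1 hd1.1
    have h1' : y1 < x1 := lt_of_le_of_ne hyx1 hd1.2
    have h2 : s2 < t2 := lt_of_le_of_ne hst2 hd2.1
    have h2' : y2 < x2 := lt_of_le_of_ne hyx2 hd2.2
    have hind := hN.indep 2 ![s1, s2] ![t1, t2] ![y1, y2] ![x1, x2]
      (by intro i; fin_cases i <;> simpa)
      (by intro i; fin_cases i <;> simpa)
      (by intro i; fin_cases i <;> simpa)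
      (by intro i; fin_cases i <;> simpa)
      (by
        intro i _ j _ hij
        fin_cases i <;> fin_cases j <;>
          first
            | exact absurd rfl hij
            | simpa using hdisj
            | simpa using hdisj.symm)
    have h01 := hind.indepFun (show (0 : Fin 2) ≠ 1 by decide)
    simp only [Matrix.cons_val_zero, Matrix.cons_val_one, Matrix.head_cons] at h01
    have h01' := h01.comp (φ := fun k : ℤ => (-1 : ℝ) ^ k) (ψ := fun k : ℤ => (-1 : ℝ) ^ k)
      negOnePow_int_measurable negOnePow_int_measurable
    have hmul := h01'.integral_mul_eq_mul_integral
      (negOnePow_int_measurable.comp (planeInc_measurable P N hN s1 t1 y1 x1)).aestronglyMeasurable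
      (negOnePow_int_measurable.comp (planeInc_measurable P N hN s2 t2 y2 x2)).aestronglyMeasurable
    have heq : ∫ ω, (-1 : ℝ) ^ (planeInc (N ω) s1 t1 y1 x1) *
        (-1 : ℝ) ^ (planeInc (N ω) s2 t2 y2 x2) ∂P =
        (∫ ω, (-1 : ℝ) ^ (planeInc (N ω) s1 t1 y1 x1) ∂P) *
        (∫ ω, (-1 : ℝ) ^ (planeInc (N ω) s2 t2 y2 x2) ∂P) := hmul
    rw [heq, planeInc_parity_integral P N hN s1 t1 y1 x1 hs1 hst1 hy1 hyx1,
      planeInc_parity_integral P N hN s2 t2 y2 x2 hs2 hst2 hy2 hyx2]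

lemma neg_one_zpow_add_two_mul (a b : ℤ) (m : ℕ) :
    (-1 : ℝ) ^ (a + b + 2 * (m : ℤ)) = (-1 : ℝ) ^ a * (-1 : ℝ) ^ b := by
  have hne : (-1 : ℝ) ≠ 0 := by norm_num
  rw [zpow_add₀ hne, zpow_add₀ hne]
  have : (2 * (m : ℤ)) = ((2 * m : ℕ) : ℤ) := by push_cast; ring
  rw [this, zpow_natCast, pow_mul]
  norm_num

end Aux

/-- For a standard Poisson process `N` on the plane, for all `0 ≤ s ≤ t` and `x, y ≥ 0`,
`E[(−1)^{N(s,y)+N(t,x)}] = exp(−2[(t−s)x + |x−y| s])`. -/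
theorem plane_poisson_parity_expectation
    {Ω : Type*} [MeasurableSpace Ω] (P : Measure Ω) [IsProbabilityMeasure P]
    (N : Ω → ℝ → ℝ → ℕ) (hN : IsStdPlanePoisson P N)
    (s t x y : ℝ) (hs : 0 ≤ s) (hst : s ≤ t) (hx : 0 ≤ x) (hy : 0 ≤ y) :
    ∫ ω, (-1 : ℝ) ^ (N ω s y + N ω t x) ∂P =
      Real.exp (-2 * ((t - s) * x + |x - y| * s)) := by
  rcases le_or_gt y x with hxy | hxy
  · -- y ≤ x
    have hpt : ∀ ω, (-1 : ℝ) ^ (N ω s y + N ω t x) =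
        (-1 : ℝ) ^ (planeInc (N ω) s t 0 x) * (-1 : ℝ) ^ (planeInc (N ω) 0 s y x) := by
      intro ω
      have h1 : ((N ω s y + N ω t x : ℕ) : ℤ) =
          planeInc (N ω) s t 0 x + planeInc (N ω) 0 s y x + 2 * (N ω s y : ℤ) := by
        simp [planeInc, hN.zero_left, hN.zero_right]
        ring
      rw [← zpow_natCast (-1 : ℝ) (N ω s y + N ω t x), h1, neg_one_zpow_add_two_mul]
    have hdisj : Disjoint (Set.Ioc s t ×ˢ Set.Ioc 0 x) (Set.Ioc 0 s ×ˢ Set.Ioc y x) := by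
      rw [Set.disjoint_left]
      rintro ⟨a, b⟩ hp hq
      exact absurd hq.1.2 (not_le.2 hp.1.1)
    rw [integral_congr_ae (Filter.Eventually.of_forall hpt),
      planeInc_parity_integral_mul P N hN s t 0 x 0 s y x hs hst le_rfl hx le_rfl hs hy hxy hdisj,
      ← Real.exp_add, abs_of_nonneg (sub_nonneg.2 hxy)]
    congr 1
    ring
  · -- x < y
    have hpt : ∀ ω, (-1 : ℝ) ^ (N ω s y + N ω t x) =
        (-1 : ℝ) ^ (planeInc (N ω) s t 0 x) * (-1 : ℝ) ^ (planeInc (N ω) 0 s x y) := by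
      intro ω
      have h1 : ((N ω s y + N ω t x : ℕ) : ℤ) =
          planeInc (N ω) s t 0 x + planeInc (N ω) 0 s x y + 2 * (N ω s x : ℤ) := by
        simp [planeInc, hN.zero_left, hN.zero_right]
        ring
      rw [← zpow_natCast (-1 : ℝ) (N ω s y + N ω t x), h1, neg_one_zpow_add_two_mul]
    have hdisj : Disjoint (Set.Ioc s t ×ˢ Set.Ioc 0 x) (Set.Ioc 0 s ×ˢ Set.Ioc x y) := by
      rw [Set.disjoint_left]
      rintro ⟨a, b⟩ hp hq
      exact absurd hq.1.2 (not_le.2 hp.1.1)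
    rw [integral_congr_ae (Filter.Eventually.of_forall hpt),
      planeInc_parity_integral_mul P N hN s t 0 x 0 s x y hs hst le_rfl hx le_rfl hs hx hxy.le
        hdisj,
      ← Real.exp_add, abs_of_neg (sub_neg.2 hxy)]
    congr 1
    ring
end

section
/- Let m be an even positive integer and let θ_n be the Donsker kernels built from an independent family {Z_k : k∈ℕ²} of identically distributed centered random variables with E[Z_k²]=1 and E[|Z_k|^m]<∞. Then there exists a constant C_m>0 such that for every f∈L²([0,T]×[0,1]) and every n≥1, E[(∫₀ᵀ∫₀¹ f(t,x) θ_n(t,x) dx dt)^m] ≤ C_m (∫₀ᵀ∫₀¹ f(t,x)² dx dt)^{m/2}. -/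
open MeasureTheory ProbabilityTheory

/-- The Donsker kernels
`θ_n(t,x) = n ∑_{k=(k¹,k²)∈ℕ²} Z_k 1_{[k¹−1,k¹)×[k²−1,k²)}(tn, xn)`,
where the index `k = (k¹,k²)` ranges over the positive integers (here encoded by
`k : ℕ × ℕ` corresponding to `(k¹,k²) = (k.1+1, k.2+1)`). -/
noncomputable def donsker {Ω : Type*} (Z : ℕ × ℕ → Ω → ℝ) (n : ℕ) (ω : Ω) (t x : ℝ) : ℝ :=
  (n : ℝ) * ∑' k : ℕ × ℕ,
    Z k ω * Set.indicator (Set.Ico (k.1 : ℝ) ((k.1 : ℝ) + 1) ×ˢ Set.Ico (k.2 : ℝ) ((k.2 : ℝ) + 1))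
      (fun _ => (1 : ℝ)) (t * n, x * n)

namespace DonskerAux

open Finset

variable {ι : Type*} [DecidableEq ι]

lemma esymm_le (b : ι → ℝ) (hb : ∀ k, 0 ≤ b k) (K : Finset ι) :
    ∀ r : ℕ, ∑ A ∈ K.powersetCard r, ∏ k ∈ A, b k ≤ (∑ k ∈ K, b k) ^ r := by
  classical
  induction K using Finset.induction_on with
  | empty =>
    intro r
    cases r with
    | zero => simp
    | succ r =>
      rw [Finset.powersetCard_eq_empty.2 (by simp)]
      simp
  | @insert a K ha ih =>
    intro r
    have hSnn : 0 ≤ ∑ k ∈ K, b k := Finset.sum_nonneg fun k _ => hb k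
    cases r with
    | zero => simp
    | succ r =>
      rw [Finset.powersetCard_succ_insert ha, Finset.sum_union, Finset.sum_image]
      · have h1 : ∑ A ∈ K.powersetCard (r+1), ∏ k ∈ A, b k ≤ (∑ k ∈ K, b k) ^ (r+1) := ih (r+1)
        have h2 : ∑ A ∈ K.powersetCard r, ∏ k ∈ insert a A, b k
            ≤ b a * (∑ k ∈ K, b k) ^ r := by
          have : ∀ A ∈ K.powersetCard r, ∏ k ∈ insert a A, b k = b a * ∏ k ∈ A, b k := by
            intro A hA
            rw [Finset.mem_powersetCard] at hA
            exact Finset.prod_insert fun haA => ha (hA.1 haA)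
          rw [Finset.sum_congr rfl this, ← Finset.mul_sum]
          exact mul_le_mul_of_nonneg_left (ih r) (hb a)
        rw [Finset.sum_insert ha]
        calc ∑ A ∈ K.powersetCard (r+1), ∏ k ∈ A, b k
              + ∑ A ∈ K.powersetCard r, ∏ k ∈ insert a A, b k
            ≤ (∑ k ∈ K, b k) ^ (r+1) + b a * (∑ k ∈ K, b k) ^ r := add_le_add h1 h2
          _ ≤ (b a + ∑ k ∈ K, b k) ^ (r+1) := by
              have hba : 0 ≤ b a := hb a
              have hx : (∑ k ∈ K, b k) ≤ b a + ∑ k ∈ K, b k := by linarith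
              calc (∑ k ∈ K, b k) ^ (r+1) + b a * (∑ k ∈ K, b k) ^ r
                  ≤ (b a + ∑ k ∈ K, b k) ^ r * (∑ k ∈ K, b k)
                      + b a * (b a + ∑ k ∈ K, b k) ^ r := by
                    have h' : (∑ k ∈ K, b k)^(r+1)
                        = (∑ k ∈ K, b k)^r * (∑ k ∈ K, b k) := pow_succ _ _
                    rw [h']
                    gcongr
                _ = (b a + ∑ k ∈ K, b k) ^ r * (b a + ∑ k ∈ K, b k) := by ring
                _ = (b a + ∑ k ∈ K, b k) ^ (r+1) := (pow_succ _ _).symm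
      · intro A hA B hB hAB
        rw [Finset.mem_coe, Finset.mem_powersetCard] at hA hB
        have haA : a ∉ A := fun h => ha (hA.1 h)
        have haB : a ∉ B := fun h => ha (hB.1 h)
        rw [← Finset.erase_insert haA, ← Finset.erase_insert haB, hAB]
      · rw [Finset.disjoint_left]
        intro A hA hA'
        rw [Finset.mem_powersetCard] at hA
        rcases Finset.mem_image.1 hA' with ⟨B, hB, rfl⟩
        exact ha (hA.1 (Finset.mem_insert_self a B))

lemma comb (m h : ℕ) (hmh : m = 2 * h) (hm : 0 < m) (K : Finset ι) (c : ι → ℝ)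
    (V : Finset (Fin m → ι)) (hV1 : ∀ g ∈ V, ∀ i, g i ∈ K)
    (hV2 : ∀ g ∈ V, ∀ k ∈ Finset.image g Finset.univ,
      2 ≤ (Finset.univ.filter fun i => g i = k).card) :
    ∑ g ∈ V, ∏ i, |c (g i)|
      ≤ ((h+1) * h^m : ℕ) * (∑ k ∈ K, c k ^ 2) ^ h := by
  classical
  set S := ∑ k ∈ K, c k ^ 2 with hSdef
  have hS : 0 ≤ S := Finset.sum_nonneg fun k _ => sq_nonneg _
  set φ : Finset ι → ℝ := fun A => (∏ k ∈ A, c k ^ 2) * S ^ (h - A.card) with hφdef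
  have hφnn : ∀ A, 0 ≤ φ A := fun A =>
    mul_nonneg (Finset.prod_nonneg fun k _ => sq_nonneg _) (pow_nonneg hS _)
  have key : ∀ g ∈ V, (∏ i, |c (g i)|) ≤ φ (Finset.image g Finset.univ)
      ∧ (Finset.image g Finset.univ).card ≤ h := by
    intro g hg
    have hgK' : ∀ i, g i ∈ K := hV1 g hg
    have hval := hV2 g hg
    set A := Finset.image g Finset.univ with hA
    set α : ι → ℕ := fun k => (Finset.univ.filter fun i => g i = k).card with hα
    have hsum : ∑ k ∈ A, α k = m := by
      rw [← Finset.card_eq_sum_card_fiberwise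
        (fun i (_ : i ∈ Finset.univ) => Finset.mem_image_of_mem g (Finset.mem_univ i))]
      simp
    have hα2 : ∀ k ∈ A, 2 ≤ α k := hval
    have hcard2 : 2 * A.card ≤ m := by
      calc 2 * A.card = ∑ _k ∈ A, 2 := by rw [Finset.sum_const, smul_eq_mul, mul_comm]
        _ ≤ ∑ k ∈ A, α k := Finset.sum_le_sum hα2
        _ = m := hsum
    have hcardh : A.card ≤ h := by omega
    refine ⟨?_, hcardh⟩
    have hsub : ∀ k ∈ A, c k ^ 2 ≤ S := by
      intro k hk
      rcases Finset.mem_image.1 hk with ⟨i, _, rfl⟩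
      exact Finset.single_le_sum (fun k _ => sq_nonneg (c k)) (hgK' i)
    have habs : ∀ k ∈ A, |c k| ≤ Real.sqrt S := by
      intro k hk
      rw [← Real.sqrt_sq_eq_abs]
      exact Real.sqrt_le_sqrt (hsub k hk)
    have hterm : ∀ k ∈ A, |c k| ^ α k ≤ c k ^ 2 * Real.sqrt S ^ (α k - 2) := by
      intro k hk
      obtain ⟨β, hβ⟩ : ∃ β, α k = 2 + β := ⟨α k - 2, by have := hα2 k hk; omega⟩
      rw [hβ, Nat.add_sub_cancel_left, pow_add, sq_abs]
      exact mul_le_mul_of_nonneg_left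
        (pow_le_pow_left₀ (abs_nonneg _) (habs k hk) β) (sq_nonneg _)
    have hprodcomp : (∏ i, |c (g i)|) = ∏ k ∈ A, |c k| ^ α k := by
      rw [hA, hα]
      exact Finset.prod_comp (fun k => |c k|) g
    rw [hprodcomp]
    calc ∏ k ∈ A, |c k| ^ α k ≤ ∏ k ∈ A, (c k ^ 2 * Real.sqrt S ^ (α k - 2)) :=
          Finset.prod_le_prod (fun k _ => pow_nonneg (abs_nonneg _) _) hterm
      _ = (∏ k ∈ A, c k ^ 2) * ∏ k ∈ A, Real.sqrt S ^ (α k - 2) := Finset.prod_mul_distrib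
      _ = (∏ k ∈ A, c k ^ 2) * Real.sqrt S ^ (∑ k ∈ A, (α k - 2)) := by
          rw [Finset.prod_pow_eq_pow_sum]
      _ = φ A := by
          have hsum2 : ∑ k ∈ A, (α k - 2) + 2 * A.card = m := by
            have h22 : ∑ k ∈ A, ((α k - 2) + 2) = ∑ k ∈ A, α k :=
              Finset.sum_congr rfl fun k hk => by have := hα2 k hk; omega
            rw [Finset.sum_add_distrib, Finset.sum_const, smul_eq_mul] at h22
            omega
          have he : ∑ k ∈ A, (α k - 2) = 2 * (h - A.card) := by omega
          rw [he, pow_mul, Real.sq_sqrt hS, hφdef]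
  -- grouping by image
  set T := K.powerset.filter (fun A => A.card ≤ h) with hTdef
  have hmaps : ∀ g ∈ V, Finset.image g Finset.univ ∈ T := by
    intro g hg
    rw [hTdef, Finset.mem_filter, Finset.mem_powerset]
    constructor
    · intro k hk
      rcases Finset.mem_image.1 hk with ⟨i, _, rfl⟩
      exact hV1 g hg i
    · exact (key g hg).2
  have step1 : ∑ g ∈ V, ∏ i, |c (g i)| ≤ ∑ g ∈ V, φ (Finset.image g Finset.univ) :=
    Finset.sum_le_sum fun g hg => (key g hg).1
  have step2 : ∑ g ∈ V, φ (Finset.image g Finset.univ)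
      = ∑ A ∈ T, ∑ g ∈ V.filter (fun g => Finset.image g Finset.univ = A),
          φ (Finset.image g Finset.univ) :=
    (Finset.sum_fiberwise_of_maps_to hmaps _).symm
  have step3 : ∀ A ∈ T, ∑ g ∈ V.filter (fun g => Finset.image g Finset.univ = A),
      φ (Finset.image g Finset.univ) ≤ (h^m : ℕ) * φ A := by
    intro A hA
    have hAh : A.card ≤ h := (Finset.mem_filter.1 hA).2
    have heq : ∑ g ∈ V.filter (fun g => Finset.image g Finset.univ = A),
        φ (Finset.image g Finset.univ)
        = ((V.filter (fun g => Finset.image g Finset.univ = A)).card : ℝ) * φ A := by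
      rw [Finset.sum_congr rfl (fun g hg => by rw [(Finset.mem_filter.1 hg).2]),
        Finset.sum_const, nsmul_eq_mul]
    rw [heq]
    have hsubset : V.filter (fun g => Finset.image g Finset.univ = A)
        ⊆ Fintype.piFinset fun _ : Fin m => A := by
      intro g hg
      rw [Finset.mem_filter] at hg
      rw [Fintype.mem_piFinset]
      intro i
      rw [← hg.2]
      exact Finset.mem_image_of_mem g (Finset.mem_univ i)
    have hcard : (V.filter (fun g => Finset.image g Finset.univ = A)).card ≤ h ^ m := by
      calc (V.filter (fun g => Finset.image g Finset.univ = A)).card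
          ≤ (Fintype.piFinset fun _ : Fin m => A).card := Finset.card_le_card hsubset
        _ = A.card ^ m := by
            rw [Fintype.card_piFinset]
            simp
        _ ≤ h ^ m := Nat.pow_le_pow_left hAh m
    exact mul_le_mul_of_nonneg_right (by exact_mod_cast Nat.cast_le.2 hcard) (hφnn A)
  have step4 : ∑ A ∈ T, φ A ≤ ((h+1 : ℕ) : ℝ) * S ^ h := by
    have hmapsT : ∀ A ∈ T, A.card ∈ Finset.range (h+1) := by
      intro A hA
      rw [Finset.mem_range]
      exact Nat.lt_succ_of_le (Finset.mem_filter.1 hA).2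
    rw [← Finset.sum_fiberwise_of_maps_to hmapsT φ]
    calc ∑ r ∈ Finset.range (h+1), ∑ A ∈ T.filter (fun A => A.card = r), φ A
        ≤ ∑ _r ∈ Finset.range (h+1), S ^ h := by
          refine Finset.sum_le_sum fun r hr => ?_
          have hrh : r ≤ h := Nat.lt_succ_iff.1 (Finset.mem_range.1 hr)
          have hcong : ∀ A ∈ T.filter (fun A => A.card = r),
              φ A = (∏ k ∈ A, c k ^ 2) * S ^ (h - r) := by
            intro A hA
            rw [hφdef]
            simp only
            rw [(Finset.mem_filter.1 hA).2]
          rw [Finset.sum_congr rfl hcong, ← Finset.sum_mul]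
          have hsub : T.filter (fun A => A.card = r) ⊆ K.powersetCard r := by
            intro A hA
            rw [Finset.mem_powersetCard]
            rw [Finset.mem_filter] at hA
            exact ⟨Finset.mem_powerset.1 (Finset.mem_filter.1 hA.1).1, hA.2⟩
          have hle : ∑ A ∈ T.filter (fun A => A.card = r), ∏ k ∈ A, c k ^ 2 ≤ S ^ r := by
            refine le_trans (Finset.sum_le_sum_of_subset_of_nonneg hsub ?_) ?_
            · intro A _ _
              exact Finset.prod_nonneg fun k _ => sq_nonneg _
            · exact esymm_le (fun k => c k ^ 2) (fun k => sq_nonneg _) K r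
          calc (∑ A ∈ T.filter (fun A => A.card = r), ∏ k ∈ A, c k ^ 2) * S ^ (h - r)
              ≤ S ^ r * S ^ (h - r) :=
                mul_le_mul_of_nonneg_right hle (pow_nonneg hS _)
            _ = S ^ h := by rw [← pow_add]; congr 1; omega
      _ = ((h+1 : ℕ) : ℝ) * S ^ h := by
          rw [Finset.sum_const, Finset.card_range, nsmul_eq_mul]
  calc ∑ g ∈ V, ∏ i, |c (g i)|
      ≤ ∑ A ∈ T, ∑ g ∈ V.filter (fun g => Finset.image g Finset.univ = A),
          φ (Finset.image g Finset.univ) := step1.trans (le_of_eq step2)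
    _ ≤ ∑ A ∈ T, (h^m : ℕ) * φ A := Finset.sum_le_sum step3
    _ = (h^m : ℕ) * ∑ A ∈ T, φ A := by rw [Finset.mul_sum]
    _ ≤ (h^m : ℕ) * (((h+1 : ℕ) : ℝ) * S ^ h) := by
        refine mul_le_mul_of_nonneg_left step4 ?_
        positivity
    _ = ((h+1) * h^m : ℕ) * S ^ h := by push_cast; ring

variable {Ω : Type*} [MeasurableSpace Ω] {P : Measure Ω} [IsProbabilityMeasure P]
variable {ι : Type*}

lemma abs_pow_le_one_add (x : ℝ) {α m : ℕ} (hαm : α ≤ m) : |x| ^ α ≤ 1 + |x| ^ m := by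
  rcases le_or_gt |x| 1 with hx | hx
  · have h1 : |x| ^ α ≤ 1 := pow_le_one₀ (abs_nonneg x) hx
    have h2 : 0 ≤ |x| ^ m := pow_nonneg (abs_nonneg x) m
    linarith
  · have h1 : |x| ^ α ≤ |x| ^ m := pow_le_pow_right₀ hx.le hαm
    linarith

lemma integrable_prod_indep {W : ι → Ω → ℝ} (hmeas : ∀ i, Measurable (W i))
    (hindep : iIndepFun W P)
    (s : Finset ι) (hint : ∀ i ∈ s, Integrable (W i) P) :
    Integrable (fun ω => ∏ i ∈ s, W i ω) P ∧
      ∫ ω, ∏ i ∈ s, W i ω ∂P = ∏ i ∈ s, ∫ ω, W i ω ∂P := by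
  classical
  induction s using Finset.induction_on with
  | empty => simp
  | @insert a s ha ih =>
    have hint' : ∀ i ∈ s, Integrable (W i) P := fun i hi => hint i (mem_insert_of_mem hi)
    obtain ⟨ih1, ih2⟩ := ih hint'
    have hIndep : IndepFun (W a) (∏ i ∈ s, W i) P :=
      (hindep.indepFun_finsetProd_of_notMem hmeas ha).symm
    have hWa : Integrable (W a) P := hint a (mem_insert_self a s)
    have hprod : Integrable (∏ i ∈ s, W i) P := by
      have : (∏ i ∈ s, W i) = fun ω => ∏ i ∈ s, W i ω := by
        funext ω; simp [Finset.prod_apply]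
      rwa [this]
    have hfun : (fun ω => ∏ i ∈ insert a s, W i ω) = W a * ∏ i ∈ s, W i := by
      funext ω
      simp [Finset.prod_insert ha, Finset.prod_apply]
    constructor
    · rw [hfun]
      exact hIndep.integrable_mul hWa hprod
    · rw [Finset.prod_insert ha, ← ih2]
      calc ∫ ω, ∏ i ∈ insert a s, W i ω ∂P = ∫ ω, (W a * ∏ i ∈ s, W i) ω ∂P := by
            rw [← hfun]
        _ = (∫ ω, W a ω ∂P) * ∫ ω, (∏ i ∈ s, W i) ω ∂P :=
            hIndep.integral_mul_eq_mul_integral hWa.aestronglyMeasurable hprod.aestronglyMeasurable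
        _ = (∫ ω, W a ω ∂P) * ∫ ω, ∏ i ∈ s, W i ω ∂P := by
            congr 1
            apply integral_congr_ae
            filter_upwards with ω
            simp [Finset.prod_apply]

variable {Z : ι → Ω → ℝ} {m : ℕ} {M : ℝ}

lemma integrable_pow_of_le (hZmeas : ∀ k, Measurable (Z k))
    (hmom : ∀ k, Integrable (fun ω => |Z k ω| ^ m) P)
    (k : ι) {α : ℕ} (hαm : α ≤ m) :
    Integrable (fun ω => Z k ω ^ α) P := by
  refine Integrable.mono' ((integrable_const (1:ℝ)).add (hmom k))
    ((hZmeas k).pow_const α).aestronglyMeasurable ?_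
  filter_upwards with ω
  rw [Real.norm_eq_abs, abs_pow]
  exact abs_pow_le_one_add _ hαm

lemma abs_integral_pow_le (hZmeas : ∀ k, Measurable (Z k))
    (hmom : ∀ k, Integrable (fun ω => |Z k ω| ^ m) P)
    (hM : ∀ k, ∫ ω, |Z k ω| ^ m ∂P ≤ M)
    (k : ι) {α : ℕ} (hαm : α ≤ m) :
    |∫ ω, Z k ω ^ α ∂P| ≤ 1 + M := by
  calc |∫ ω, Z k ω ^ α ∂P| ≤ ∫ ω, |Z k ω ^ α| ∂P := by
        simpa [Real.norm_eq_abs] using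
          norm_integral_le_integral_norm (μ := P) (f := fun ω => Z k ω ^ α)
    _ ≤ ∫ ω, (1 + |Z k ω| ^ m) ∂P := by
        refine integral_mono ((integrable_pow_of_le hZmeas hmom k hαm).abs) 
          ((integrable_const (1:ℝ)).add (hmom k)) ?_
        intro ω
        simp only [abs_pow]
        exact abs_pow_le_one_add _ hαm
    _ = 1 + ∫ ω, |Z k ω| ^ m ∂P := by
        rw [integral_add (integrable_const _) (hmom k)]
        simp
    _ ≤ 1 + M := by linarith [hM k]

lemma rosenthal (hZmeas : ∀ k, Measurable (Z k))
    (hindep : iIndepFun Z P)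
    (hcent : ∀ k, ∫ ω, Z k ω ∂P = 0)
    (hmom : ∀ k, Integrable (fun ω => |Z k ω| ^ m) P)
    (hM : ∀ k, ∫ ω, |Z k ω| ^ m ∂P ≤ M) (hM0 : 0 ≤ M)
    {h : ℕ} (hmh : m = 2 * h) (hm : 0 < m)
    (K : Finset ι) (c : ι → ℝ) :
    Integrable (fun ω => (∑ k ∈ K, c k * Z k ω) ^ m) P ∧
      ∫ ω, (∑ k ∈ K, c k * Z k ω) ^ m ∂P
        ≤ (((h+1) * h^m : ℕ) * (1 + M) ^ m) * (∑ k ∈ K, c k ^ 2) ^ h := by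
  classical
  set GG := Fintype.piFinset (fun _ : Fin m => K) with hGG
  have hexp : ∀ ω, (∑ k ∈ K, c k * Z k ω) ^ m
      = ∑ g ∈ GG, (∏ i, c (g i)) * ∏ i, Z (g i) ω := by
    intro ω
    rw [Finset.sum_pow' K (fun k => c k * Z k ω) m]
    exact Finset.sum_congr rfl fun g _ => Finset.prod_mul_distrib
  set α : (Fin m → ι) → ι → ℕ :=
    fun g k => (Finset.univ.filter fun i => g i = k).card with hαdef
  have hαle : ∀ g k, α g k ≤ m := by
    intro g k
    calc (Finset.univ.filter fun i => g i = k).card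
        ≤ (Finset.univ : Finset (Fin m)).card := Finset.card_le_card (Finset.filter_subset _ _)
      _ = m := by simp
  -- pointwise regrouping
  have hgroup : ∀ (g : Fin m → ι) (ω : Ω),
      ∏ i, Z (g i) ω = ∏ k ∈ Finset.image g Finset.univ, Z k ω ^ α g k := by
    intro g ω
    exact Finset.prod_comp (fun k => Z k ω) g
  -- integrability and expectation of each product
  have hprod : ∀ g : Fin m → ι,
      Integrable (fun ω => ∏ i, Z (g i) ω) P ∧
        ∫ ω, ∏ i, Z (g i) ω ∂P
          = ∏ k ∈ Finset.image g Finset.univ, ∫ ω, Z k ω ^ α g k ∂P := by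
    intro g
    have hW : ∀ k, Measurable (fun ω => Z k ω ^ α g k) :=
      fun k => (hZmeas k).pow_const _
    have hWindep : iIndepFun (fun k ω => Z k ω ^ α g k) P :=
      hindep.comp (fun k x => x ^ α g k) (fun k => measurable_id.pow_const _)
    have hWint : ∀ k ∈ Finset.image g Finset.univ,
        Integrable (fun ω => Z k ω ^ α g k) P :=
      fun k _ => integrable_pow_of_le hZmeas hmom k (hαle g k)
    obtain ⟨h1, h2⟩ := integrable_prod_indep hW hWindep (Finset.image g Finset.univ) hWint
    constructor
    · have : (fun ω => ∏ i, Z (g i) ω)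
          = fun ω => ∏ k ∈ Finset.image g Finset.univ, Z k ω ^ α g k := by
        funext ω; exact hgroup g ω
      rw [this]; exact h1
    · rw [integral_congr_ae (Filter.Eventually.of_forall (hgroup g))]
      exact h2
  -- integrability of the power
  have hintpow : Integrable (fun ω => (∑ k ∈ K, c k * Z k ω) ^ m) P := by
    have : (fun ω => (∑ k ∈ K, c k * Z k ω) ^ m)
        = fun ω => ∑ g ∈ GG, (∏ i, c (g i)) * ∏ i, Z (g i) ω := by
      funext ω; exact hexp ω
    rw [this]
    exact integrable_finset_sum _ fun g _ => ((hprod g).1.const_mul _)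
  refine ⟨hintpow, ?_⟩
  -- compute the integral
  have hint : ∫ ω, (∑ k ∈ K, c k * Z k ω) ^ m ∂P
      = ∑ g ∈ GG, (∏ i, c (g i)) * ∏ k ∈ Finset.image g Finset.univ, ∫ ω, Z k ω ^ α g k ∂P := by
    rw [integral_congr_ae (Filter.Eventually.of_forall hexp),
      integral_finset_sum _ fun g _ => ((hprod g).1.const_mul _)]
    refine Finset.sum_congr rfl fun g _ => ?_
    rw [integral_const_mul, (hprod g).2]
  rw [hint]
  -- terms with a singleton fiber vanish
  set valid : (Fin m → ι) → Prop :=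
    fun g => ∀ k ∈ Finset.image g Finset.univ,
      2 ≤ (Finset.univ.filter fun i => g i = k).card with hvalid
  have hvanish : ∀ g ∈ GG, ¬ valid g →
      (∏ i, c (g i)) * ∏ k ∈ Finset.image g Finset.univ, ∫ ω, Z k ω ^ α g k ∂P = 0 := by
    intro g _ hng
    have hng' : ∃ k ∈ Finset.image g Finset.univ,
        (Finset.univ.filter fun i => g i = k).card < 2 := by
      by_contra hc
      push_neg at hc
      exact hng (fun k hk => hc k hk)
    obtain ⟨k, hk, hk2⟩ := hng'
    have hk1 : 1 ≤ α g k := by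
      rcases Finset.mem_image.1 hk with ⟨i, _, rfl⟩
      refine Finset.card_pos.2 ⟨i, ?_⟩
      simp
    have hk1' : α g k = 1 := by
      have h2 := hk2
      simp only [hαdef] at hk1 ⊢
      omega
    have : ∫ ω, Z k ω ^ α g k ∂P = 0 := by
      rw [hk1']
      simpa using hcent k
    rw [Finset.prod_eq_zero hk this, mul_zero]
  have hzero : ∑ g ∈ GG, (∏ i, c (g i)) * ∏ k ∈ Finset.image g Finset.univ,
      ∫ ω, Z k ω ^ α g k ∂P
      = ∑ g ∈ GG.filter valid, (∏ i, c (g i)) * ∏ k ∈ Finset.image g Finset.univ,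
        ∫ ω, Z k ω ^ α g k ∂P := by
    symm
    refine Finset.sum_filter_of_ne fun g hg hne => ?_
    by_contra hng
    exact hne (hvanish g hg hng)
  rw [hzero]
  -- bound each valid term
  have hMle : ∀ g : Fin m → ι,
      |∏ k ∈ Finset.image g Finset.univ, ∫ ω, Z k ω ^ α g k ∂P| ≤ (1 + M) ^ m := by
    intro g
    rw [Finset.abs_prod]
    calc ∏ k ∈ Finset.image g Finset.univ, |∫ ω, Z k ω ^ α g k ∂P|
        ≤ ∏ _k ∈ Finset.image g Finset.univ, (1 + M) :=
          Finset.prod_le_prod (fun k _ => abs_nonneg _)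
            (fun k _ => abs_integral_pow_le hZmeas hmom hM k (hαle g k))
      _ = (1 + M) ^ (Finset.image g Finset.univ).card := by rw [Finset.prod_const]
      _ ≤ (1 + M) ^ m := by
          refine pow_le_pow_right₀ (by linarith) ?_
          calc (Finset.image g Finset.univ).card
              ≤ (Finset.univ : Finset (Fin m)).card := Finset.card_image_le
            _ = m := by simp
  calc ∑ g ∈ GG.filter valid, (∏ i, c (g i)) * ∏ k ∈ Finset.image g Finset.univ,
        ∫ ω, Z k ω ^ α g k ∂P
      ≤ ∑ g ∈ GG.filter valid, (∏ i, |c (g i)|) * (1 + M) ^ m := by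
        refine Finset.sum_le_sum fun g _ => ?_
        calc (∏ i, c (g i)) * ∏ k ∈ Finset.image g Finset.univ, ∫ ω, Z k ω ^ α g k ∂P
            ≤ |(∏ i, c (g i)) * ∏ k ∈ Finset.image g Finset.univ, ∫ ω, Z k ω ^ α g k ∂P| :=
              le_abs_self _
          _ = (∏ i, |c (g i)|) * |∏ k ∈ Finset.image g Finset.univ, ∫ ω, Z k ω ^ α g k ∂P| := by
              rw [abs_mul, Finset.abs_prod]
          _ ≤ (∏ i, |c (g i)|) * (1 + M) ^ m :=
              mul_le_mul_of_nonneg_left (hMle g)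
                (Finset.prod_nonneg fun i _ => abs_nonneg _)
    _ = (1 + M) ^ m * ∑ g ∈ GG.filter valid, ∏ i, |c (g i)| := by
        rw [← Finset.sum_mul, mul_comm]
    _ ≤ (1 + M) ^ m * (((h+1) * h^m : ℕ) * (∑ k ∈ K, c k ^ 2) ^ h) := by
        refine mul_le_mul_of_nonneg_left ?_ (by positivity)
        refine comb m h hmh hm K c (GG.filter valid) ?_ ?_
        · intro g hg i
          exact (Fintype.mem_piFinset.1 (Finset.mem_filter.1 hg).1) i
        · intro g hg
          exact (Finset.mem_filter.1 hg).2
    _ = (((h+1) * h^m : ℕ) * (1 + M) ^ m) * (∑ k ∈ K, c k ^ 2) ^ h := by ring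


lemma sq_setIntegral_le {X : Type*} [MeasurableSpace X] {μ : Measure X} {s : Set X}
    (hs : μ s ≠ ⊤) {g : X → ℝ} (hg1 : IntegrableOn g s μ)
    (hg2 : IntegrableOn (fun x => g x ^ 2) s μ) :
    (∫ x in s, g x ∂μ) ^ 2 ≤ (μ s).toReal * ∫ x in s, g x ^ 2 ∂μ := by
  set V := (μ s).toReal with hV
  haveI : IsFiniteMeasure (μ.restrict s) :=
    ⟨by rw [Measure.restrict_apply_univ]; exact lt_top_iff_ne_top.2 hs⟩
  rcases eq_or_lt_of_le (ENNReal.toReal_nonneg : 0 ≤ V) with hV0 | hV0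
  · have hμs : μ s = 0 := by
      rcases (ENNReal.toReal_eq_zero_iff _).1 hV0.symm with h | h
      · exact h
      · exact absurd h hs
    rw [Measure.restrict_eq_zero.2 hμs]
    simp
  · set I1 := ∫ x in s, g x ∂μ with hI1
    set I2 := ∫ x in s, g x ^ 2 ∂μ with hI2
    set a := I1 / V with ha
    have h0 : 0 ≤ ∫ x in s, (g x - a) ^ 2 ∂μ := integral_nonneg fun x => sq_nonneg _
    have hsub : Integrable (fun x => g x ^ 2 - 2 * a * g x) (μ.restrict s) :=
      hg2.sub (hg1.const_mul (2 * a))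
    have hexp : ∫ x in s, (g x - a) ^ 2 ∂μ = I2 - 2 * a * I1 + a ^ 2 * V := by
      have h1 : ∀ x, (g x - a) ^ 2 = (g x ^ 2 - 2 * a * g x) + a ^ 2 := by intro x; ring
      rw [integral_congr_ae (Filter.Eventually.of_forall fun x => h1 x)]
      rw [integral_add hsub (integrable_const _)]
      rw [integral_sub hg2 (hg1.const_mul (2 * a))]
      rw [integral_const_mul, integral_const, measureReal_restrict_apply_univ, Measure.real, smul_eq_mul]
      ring
    rw [hexp] at h0
    have hVne : V ≠ 0 := ne_of_gt hV0
    have heq : I2 - 2 * a * I1 + a ^ 2 * V = I2 - I1 ^ 2 / V := by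
      rw [ha]; field_simp; ring
    rw [heq] at h0
    have h2 : I1 ^ 2 / V ≤ I2 := by linarith
    have h3 : I1 ^ 2 ≤ I2 * V := (div_le_iff₀ hV0).1 h2
    rw [mul_comm]
    exact h3

lemma analysis {T : ℝ} (hT : 0 < T) {Ω : Type*} (Z : ℕ × ℕ → Ω → ℝ) {n : ℕ} (hn : 1 ≤ n)
    (f : ℝ → ℝ → ℝ) (hfm : Measurable (Function.uncurry f))
    (hf2 : IntegrableOn (fun q : ℝ × ℝ => (f q.1 q.2) ^ 2)
      (Set.Icc (0:ℝ) T ×ˢ Set.Icc (0:ℝ) 1)) :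
    ∃ (K : Finset (ℕ × ℕ)) (c : ℕ × ℕ → ℝ),
      (∀ ω, ∫ t in (0:ℝ)..T, ∫ x in (0:ℝ)..1, f t x * donsker Z n ω t x
          = ∑ k ∈ K, c k * Z k ω)
      ∧ ∑ k ∈ K, (c k) ^ 2 ≤ ∫ t in (0:ℝ)..T, ∫ x in (0:ℝ)..1, (f t x) ^ 2 := by
  classical
  have hn' : (0:ℕ) < n := hn
  have hn0 : (0:ℝ) < n := by exact_mod_cast hn'
  set D : Set (ℝ × ℝ) := Set.Ioc 0 T ×ˢ Set.Ioc 0 1 with hD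
  set D' : Set (ℝ × ℝ) := Set.Ioc 0 T ×ˢ Set.Ioo 0 1 with hD'
  have hDm : MeasurableSet D := measurableSet_Ioc.prod measurableSet_Ioc
  have hD'm : MeasurableSet D' := measurableSet_Ioc.prod measurableSet_Ioo
  have hDae : D =ᵐ[(volume : Measure (ℝ × ℝ))] D' := by
    rw [MeasureTheory.ae_eq_set]
    constructor
    · refine measure_mono_null (fun p hp => ?_) (?_ : volume (Set.Ioc (0:ℝ) T ×ˢ ({1} : Set ℝ)) = 0)
      · obtain ⟨⟨h1, h2⟩, h3⟩ := hp
        have hx : p.2 ∉ Set.Ioo (0:ℝ) 1 := fun hcon => h3 ⟨h1, hcon⟩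
        have : p.2 = 1 := by
          rcases h2 with ⟨h2a, h2b⟩
          by_contra hne
          exact hx ⟨h2a, lt_of_le_of_ne h2b hne⟩
        exact ⟨h1, this⟩
      · rw [Measure.volume_eq_prod, Measure.prod_prod]
        simp
    · have : D' ⊆ D := Set.prod_mono (le_refl _) Set.Ioo_subset_Ioc_self
      rw [Set.diff_eq_empty.2 this]
      simp
  have hrestr : (volume : Measure (ℝ × ℝ)).restrict D = volume.restrict D' :=
    Measure.restrict_congr_set hDae
  have hvolD : (volume : Measure (ℝ × ℝ)) D ≠ ⊤ := by
    rw [hD, Measure.volume_eq_prod, Measure.prod_prod, Real.volume_Ioc, Real.volume_Ioc]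
    exact ENNReal.mul_ne_top ENNReal.ofReal_ne_top ENNReal.ofReal_ne_top
  have hsubD : D ⊆ Set.Icc 0 T ×ˢ Set.Icc 0 1 :=
    Set.prod_mono Set.Ioc_subset_Icc_self Set.Ioc_subset_Icc_self
  have hf2D : IntegrableOn (fun q : ℝ × ℝ => f q.1 q.2 ^ 2) D volume := hf2.mono_set hsubD
  haveI : IsFiniteMeasure ((volume : Measure (ℝ × ℝ)).restrict D) :=
    ⟨by rw [Measure.restrict_apply_univ]; exact lt_top_iff_ne_top.2 hvolD⟩
  have habs : ∀ q : ℝ × ℝ, ‖f q.1 q.2‖ ≤ 1 + f q.1 q.2 ^ 2 := by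
    intro q
    rw [Real.norm_eq_abs]
    nlinarith [sq_nonneg (|f q.1 q.2| - 1), sq_abs (f q.1 q.2), abs_nonneg (f q.1 q.2)]
  have hf1D : IntegrableOn (fun q : ℝ × ℝ => f q.1 q.2) D volume := by
    refine Integrable.mono' ((integrable_const (1:ℝ)).add hf2D) ?_ (ae_of_all _ habs)
    exact hfm.aestronglyMeasurable.restrict
  -- cells
  set cell : ℕ × ℕ → Set (ℝ × ℝ) := fun k =>
    Set.Ico ((k.1:ℝ)/n) (((k.1:ℝ)+1)/n) ×ˢ Set.Ico ((k.2:ℝ)/n) (((k.2:ℝ)+1)/n) with hcell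
  have hcellm : ∀ k, MeasurableSet (cell k) := fun k => measurableSet_Ico.prod measurableSet_Ico
  have hmemcell : ∀ (k : ℕ × ℕ) (p : ℝ × ℝ), p ∈ cell k ↔
      (((k.1:ℝ) ≤ p.1 * n ∧ p.1 * n < (k.1:ℝ) + 1) ∧
        ((k.2:ℝ) ≤ p.2 * n ∧ p.2 * n < (k.2:ℝ) + 1)) := by
    intro k p
    rw [hcell]
    simp only [Set.mem_prod, Set.mem_Ico]
    rw [div_le_iff₀ hn0, lt_div_iff₀ hn0, div_le_iff₀ hn0, lt_div_iff₀ hn0]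
  have hcellvol : ∀ k, (volume : Measure (ℝ × ℝ)) (cell k)
      = ENNReal.ofReal (1/(n:ℝ)) * ENNReal.ofReal (1/(n:ℝ)) := by
    intro k
    rw [hcell]
    rw [Measure.volume_eq_prod, Measure.prod_prod, Real.volume_Ico, Real.volume_Ico]
    congr 2 <;> · rw [div_sub_div_same]; norm_num
  set idx : ℝ × ℝ → ℕ × ℕ := fun p => (⌊p.1 * n⌋₊, ⌊p.2 * n⌋₊) with hidx
  have hmem_idx : ∀ (k : ℕ × ℕ) (p : ℝ × ℝ), p ∈ cell k → idx p = k := by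
    rintro ⟨k1, k2⟩ p hp
    rw [hmemcell] at hp
    obtain ⟨⟨h1, h2⟩, h3, h4⟩ := hp
    have ht0 : (0:ℝ) ≤ p.1 * n := le_trans (Nat.cast_nonneg _) h1
    have hx0 : (0:ℝ) ≤ p.2 * n := le_trans (Nat.cast_nonneg _) h3
    have e1 : ⌊p.1 * n⌋₊ = k1 := (Nat.floor_eq_iff ht0).2 ⟨h1, by push_cast; exact h2⟩
    have e2 : ⌊p.2 * n⌋₊ = k2 := (Nat.floor_eq_iff hx0).2 ⟨h3, by push_cast; exact h4⟩
    rw [hidx]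
    simp [e1, e2]
  have hidx_mem : ∀ p : ℝ × ℝ, 0 ≤ p.1 → 0 ≤ p.2 → p ∈ cell (idx p) := by
    intro p h1 h2
    rw [hmemcell, hidx]
    have ht0 : (0:ℝ) ≤ p.1 * n := mul_nonneg h1 hn0.le
    have hx0 : (0:ℝ) ≤ p.2 * n := mul_nonneg h2 hn0.le
    exact ⟨⟨Nat.floor_le ht0, Nat.lt_floor_add_one _⟩,
      ⟨Nat.floor_le hx0, Nat.lt_floor_add_one _⟩⟩
  set K : Finset (ℕ × ℕ) := Finset.range (⌊T * (n:ℝ)⌋₊ + 1) ×ˢ Finset.range n with hK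
  have hidxK : ∀ p ∈ D', idx p ∈ K := by
    intro p hp
    obtain ⟨ht, hx⟩ := hp
    rw [hK, Finset.mem_product]
    constructor
    · rw [Finset.mem_range, Nat.lt_succ_iff]
      exact Nat.floor_le_floor (mul_le_mul_of_nonneg_right ht.2 hn0.le)
    · rw [Finset.mem_range, Nat.floor_lt (mul_nonneg hx.1.le hn0.le)]
      calc p.2 * n < 1 * n := mul_lt_mul_of_pos_right hx.2 hn0
        _ = n := one_mul _
  have hdonsker : ∀ (ω : Ω) (p : ℝ × ℝ), 0 ≤ p.1 → 0 ≤ p.2 →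
      donsker Z n ω p.1 p.2 = n * Z (idx p) ω := by
    intro ω p h1 h2
    simp only [donsker]
    congr 1
    have hsing : ∀ k : ℕ × ℕ, k ≠ idx p →
        Z k ω * Set.indicator (Set.Ico (k.1 : ℝ) ((k.1 : ℝ) + 1)
          ×ˢ Set.Ico (k.2 : ℝ) ((k.2 : ℝ) + 1)) (fun _ => (1:ℝ)) (p.1 * n, p.2 * n) = 0 := by
      intro k hk
      rw [Set.indicator_of_notMem, mul_zero]
      intro hmem
      obtain ⟨hm1, hm2⟩ := hmem
      exact hk ((hmem_idx k p ((hmemcell k p).2 ⟨⟨hm1.1, hm1.2⟩, ⟨hm2.1, hm2.2⟩⟩)).symm ▸ rfl)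
    rw [tsum_eq_single (idx p) hsing]
    have hmem : p ∈ cell (idx p) := hidx_mem p h1 h2
    rw [hmemcell] at hmem
    rw [Set.indicator_of_mem, mul_one]
    exact ⟨hmem.1, hmem.2⟩
  set c : ℕ × ℕ → ℝ := fun k => (n:ℝ) * ∫ p in cell k ∩ D', f p.1 p.2 with hc
  have hf2D' : IntegrableOn (fun q : ℝ × ℝ => f q.1 q.2 ^ 2) D' volume := by
    rw [IntegrableOn, ← hrestr]; exact hf2D
  have hf1D' : IntegrableOn (fun q : ℝ × ℝ => f q.1 q.2) D' volume := by
    rw [IntegrableOn, ← hrestr]; exact hf1D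
  refine ⟨K, c, ?_, ?_⟩
  · -- part (1)
    intro ω
    set F : ℝ × ℝ → ℝ := fun p => f p.1 p.2 * donsker Z n ω p.1 p.2 with hF
    set G : ℝ × ℝ → ℝ := fun p => ∑ k ∈ K,
      Set.indicator (cell k) (fun q => (n:ℝ) * Z k ω * f q.1 q.2) p with hG
    have hFG : ∀ p ∈ D', F p = G p := by
      intro p hp
      have h1 : 0 < p.1 := hp.1.1
      have h2 : 0 < p.2 := hp.2.1
      rw [hF, hG]
      simp only
      rw [Finset.sum_eq_single_of_mem (idx p) (hidxK p hp)
        (fun k _ hne => Set.indicator_of_notMem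
          (fun hmem => hne (hmem_idx k p hmem).symm) _)]
      rw [Set.indicator_of_mem (hidx_mem p h1.le h2.le)]
      rw [hdonsker ω p h1.le h2.le]
      ring
    have hGint : Integrable G (volume.restrict D') := by
      refine integrable_finset_sum _ fun k _ => ?_
      exact (hf1D'.const_mul _).indicator (hcellm k)
    have hFint : Integrable F (volume.restrict D) := by
      rw [hrestr]
      exact hGint.congr ((ae_restrict_iff' hD'm).2
        (ae_of_all _ fun p hp => (hFG p hp).symm))
    have hiter : ∫ t in (0:ℝ)..T, ∫ x in (0:ℝ)..1, f t x * donsker Z n ω t x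
        = ∫ p in D, F p ∂volume := by
      rw [intervalIntegral.integral_of_le hT.le]
      simp only [intervalIntegral.integral_of_le zero_le_one]
      rw [hD, Measure.volume_eq_prod, setIntegral_prod]
      exact (Measure.volume_eq_prod ℝ ℝ) ▸ hFint
    rw [hiter]
    have e1 : ∫ p in D, F p ∂volume = ∫ p in D', F p ∂volume := by rw [hrestr]
    have e2 : ∫ p in D', F p ∂volume = ∫ p in D', G p ∂volume :=
      setIntegral_congr_fun hD'm hFG
    rw [e1, e2, hG, integral_finset_sum _ fun k _ => (hf1D'.const_mul _).indicator (hcellm k)]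
    refine Finset.sum_congr rfl fun k _ => ?_
    rw [integral_indicator (hcellm k), Measure.restrict_restrict (hcellm k),
      integral_const_mul, hc]
    ring
  · -- part (2)
    have hcs : ∀ k ∈ K, c k ^ 2 ≤ ∫ p in cell k ∩ D', f p.1 p.2 ^ 2 := by
      intro k _
      have hfin : (volume : Measure (ℝ × ℝ)) (cell k ∩ D') ≠ ⊤ := by
        refine ne_top_of_le_ne_top ?_ (measure_mono Set.inter_subset_left)
        rw [hcellvol k]
        exact ENNReal.mul_ne_top ENNReal.ofReal_ne_top ENNReal.ofReal_ne_top
      have hvol : ((volume : Measure (ℝ × ℝ)) (cell k ∩ D')).toReal ≤ 1/(n:ℝ) * (1/(n:ℝ)) := by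
        have h1 : (volume : Measure (ℝ × ℝ)) (cell k ∩ D')
            ≤ ENNReal.ofReal (1/(n:ℝ) * (1/(n:ℝ))) := by
          rw [ENNReal.ofReal_mul (by positivity)]
          rw [← hcellvol k]
          exact measure_mono Set.inter_subset_left
        exact ENNReal.toReal_le_of_le_ofReal (by positivity) h1
      have hg1 : IntegrableOn (fun q : ℝ × ℝ => f q.1 q.2) (cell k ∩ D') volume :=
        hf1D'.mono_set Set.inter_subset_right
      have hg2 : IntegrableOn (fun q : ℝ × ℝ => f q.1 q.2 ^ 2) (cell k ∩ D') volume :=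
        hf2D'.mono_set Set.inter_subset_right
      have hCS := sq_setIntegral_le hfin hg1 hg2
      have hint2nn : 0 ≤ ∫ p in cell k ∩ D', f p.1 p.2 ^ 2 :=
        integral_nonneg fun p => sq_nonneg _
      calc c k ^ 2 = (n:ℝ)^2 * (∫ p in cell k ∩ D', f p.1 p.2) ^ 2 := by rw [hc]; ring
        _ ≤ (n:ℝ)^2 * (((volume : Measure (ℝ × ℝ)) (cell k ∩ D')).toReal
              * ∫ p in cell k ∩ D', f p.1 p.2 ^ 2) := by
            exact mul_le_mul_of_nonneg_left hCS (by positivity)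
        _ ≤ (n:ℝ)^2 * ((1/(n:ℝ) * (1/(n:ℝ))) * ∫ p in cell k ∩ D', f p.1 p.2 ^ 2) := by
            refine mul_le_mul_of_nonneg_left
              (mul_le_mul_of_nonneg_right hvol hint2nn) (by positivity)
        _ = ∫ p in cell k ∩ D', f p.1 p.2 ^ 2 := by
            have hne : (n:ℝ) ≠ 0 := ne_of_gt hn0
            field_simp
    have hindsum : ∑ k ∈ K, ∫ p in cell k ∩ D', f p.1 p.2 ^ 2
        ≤ ∫ p in D', f p.1 p.2 ^ 2 := by
      have e4 : ∀ k ∈ K, ∫ p in cell k ∩ D', f p.1 p.2 ^ 2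
          = ∫ p in D', Set.indicator (cell k) (fun q => f q.1 q.2 ^ 2) p ∂volume := by
        intro k _
        rw [integral_indicator (hcellm k), Measure.restrict_restrict (hcellm k)]
      rw [Finset.sum_congr rfl e4,
        ← integral_finset_sum _ fun k _ => (hf2D'.indicator (hcellm k))]
      refine integral_mono_ae
        (integrable_finset_sum _ fun k _ => (hf2D'.indicator (hcellm k))) hf2D' ?_
      refine (ae_restrict_iff' hD'm).2 (ae_of_all _ fun p hp => ?_)
      show ∑ k ∈ K, Set.indicator (cell k) (fun q => f q.1 q.2 ^ 2) p ≤ f p.1 p.2 ^ 2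
      have hpidx : idx p ∈ K := hidxK p hp
      by_cases hpc : p ∈ cell (idx p)
      · rw [Finset.sum_eq_single_of_mem (idx p) hpidx
          (fun k _ hne => Set.indicator_of_notMem
            (fun hmem => hne (hmem_idx k p hmem).symm) _)]
        rw [Set.indicator_of_mem hpc]
      · rw [Finset.sum_eq_zero fun k hk => ?_]
        · exact sq_nonneg _
        · by_cases hmem : p ∈ cell k
          · exact absurd (hmem_idx k p hmem ▸ hmem) hpc
          · exact Set.indicator_of_notMem hmem _
    have hRHS : ∫ t in (0:ℝ)..T, ∫ x in (0:ℝ)..1, (f t x) ^ 2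
        = ∫ p in D', f p.1 p.2 ^ 2 ∂volume := by
      rw [intervalIntegral.integral_of_le hT.le]
      simp only [intervalIntegral.integral_of_le zero_le_one]
      rw [show (∫ p in D', f p.1 p.2 ^ 2 ∂volume) = ∫ p in D, f p.1 p.2 ^ 2 ∂volume by
        rw [hrestr]]
      rw [hD, Measure.volume_eq_prod, setIntegral_prod]
      exact (Measure.volume_eq_prod ℝ ℝ) ▸ hf2D
    rw [hRHS]
    exact le_trans (Finset.sum_le_sum hcs) hindsum

end DonskerAux

/-- Moment bound for the Donsker kernels: if `{Z_k}` are i.i.d., centered, with unit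
variance and finite `m`-th moment (`m` an even positive integer), then there is
`C_m > 0` such that for every `f ∈ L²([0,T]×[0,1])` and every `n ≥ 1`,
`E[(∫₀ᵀ∫₀¹ f θ_n)^m] ≤ C_m (∫₀ᵀ∫₀¹ f²)^{m/2}`. -/
theorem donsker_moment_bound (T : ℝ) (hT : 0 < T)
    {Ω : Type*} [MeasurableSpace Ω] (P : Measure Ω) [IsProbabilityMeasure P]
    (Z : ℕ × ℕ → Ω → ℝ) (hZmeas : ∀ k, Measurable (Z k))
    (hindep : iIndepFun Z P)
    (hident : ∀ k k' : ℕ × ℕ, Measure.map (Z k) P = Measure.map (Z k') P)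
    (hcent : ∀ k, ∫ ω, Z k ω ∂P = 0)
    (hvar : ∀ k, ∫ ω, (Z k ω) ^ 2 ∂P = 1)
    (m : ℕ) (hmeven : Even m) (hm : 0 < m)
    (hmom : ∀ k, Integrable (fun ω => |Z k ω| ^ m) P) :
    ∃ C : ℝ, 0 < C ∧ ∀ f : ℝ → ℝ → ℝ, Measurable (Function.uncurry f) →
      IntegrableOn (fun q : ℝ × ℝ => (f q.1 q.2) ^ 2)
        (Set.Icc (0 : ℝ) T ×ˢ Set.Icc (0 : ℝ) 1) →
      ∀ n : ℕ, 1 ≤ n →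
        ∫⁻ ω, ENNReal.ofReal
            ((∫ t in (0 : ℝ)..T, ∫ x in (0 : ℝ)..1, f t x * donsker Z n ω t x) ^ m) ∂P ≤
          ENNReal.ofReal
            (C * (∫ t in (0 : ℝ)..T, ∫ x in (0 : ℝ)..1, (f t x) ^ 2) ^ ((m : ℝ) / 2)) := by
  classical
  obtain ⟨h, hmh⟩ := hmeven
  have hmh2 : m = 2 * h := by omega
  set M : ℝ := ∫ ω, |Z (0,0) ω| ^ m ∂P with hMdef
  have hMk : ∀ k, ∫ ω, |Z k ω| ^ m ∂P = M := by
    intro k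
    have e1 : ∀ k' : ℕ × ℕ, ∫ ω, |Z k' ω| ^ m ∂P = ∫ y, |y| ^ m ∂(Measure.map (Z k') P) := by
      intro k'
      exact (integral_map (hZmeas k').aemeasurable
        ((measurable_abs.pow_const m).aestronglyMeasurable)).symm
    rw [hMdef, e1 k, e1 (0,0), hident k (0,0)]
  have hM0 : 0 ≤ M := by
    rw [hMdef]
    exact integral_nonneg fun ω => pow_nonneg (abs_nonneg _) m
  set C0 : ℝ := (((h+1) * h^m : ℕ) : ℝ) * (1+M)^m with hC0
  have hC00 : 0 ≤ C0 := by
    rw [hC0]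
    positivity
  refine ⟨C0 + 1, by positivity, ?_⟩
  intro f hfm hf2 n hn
  obtain ⟨K, c, h1, h2⟩ := DonskerAux.analysis hT Z hn f hfm hf2
  have hS0 : 0 ≤ ∑ k ∈ K, c k ^ 2 := Finset.sum_nonneg fun k _ => sq_nonneg _
  have hF0 : 0 ≤ ∫ t in (0:ℝ)..T, ∫ x in (0:ℝ)..1, (f t x) ^ 2 := le_trans hS0 h2
  obtain ⟨hint, hbound⟩ := DonskerAux.rosenthal hZmeas hindep hcent hmom
    (fun k => le_of_eq (hMk k)) hM0 hmh2 hm K c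
  have hnonneg : ∀ ω, (0:ℝ) ≤ (∑ k ∈ K, c k * Z k ω) ^ m := fun ω =>
    (Even.pow_nonneg ⟨h, hmh⟩ _ : _)
  have hrpow : (∫ t in (0:ℝ)..T, ∫ x in (0:ℝ)..1, (f t x) ^ 2) ^ ((m:ℝ)/2)
      = (∫ t in (0:ℝ)..T, ∫ x in (0:ℝ)..1, (f t x) ^ 2) ^ (h:ℕ) := by
    have hh : ((m:ℝ)/2) = ((h:ℕ):ℝ) := by rw [hmh2]; push_cast; ring
    rw [hh, Real.rpow_natCast]
  calc ∫⁻ ω, ENNReal.ofReal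
        ((∫ t in (0:ℝ)..T, ∫ x in (0:ℝ)..1, f t x * donsker Z n ω t x) ^ m) ∂P
      = ∫⁻ ω, ENNReal.ofReal ((∑ k ∈ K, c k * Z k ω) ^ m) ∂P :=
        lintegral_congr fun ω => by rw [h1 ω]
    _ = ENNReal.ofReal (∫ ω, (∑ k ∈ K, c k * Z k ω) ^ m ∂P) :=
        (MeasureTheory.ofReal_integral_eq_lintegral_ofReal hint
          (ae_of_all _ hnonneg)).symm
    _ ≤ ENNReal.ofReal ((C0 + 1)
          * (∫ t in (0:ℝ)..T, ∫ x in (0:ℝ)..1, (f t x) ^ 2) ^ ((m:ℝ)/2)) := by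
        refine ENNReal.ofReal_le_ofReal ?_
        rw [hrpow]
        calc ∫ ω, (∑ k ∈ K, c k * Z k ω) ^ m ∂P
            ≤ C0 * (∑ k ∈ K, c k ^ 2) ^ h := hbound
          _ ≤ C0 * (∫ t in (0:ℝ)..T, ∫ x in (0:ℝ)..1, (f t x) ^ 2) ^ (h:ℕ) :=
              mul_le_mul_of_nonneg_left (pow_le_pow_left₀ hS0 h2 h) hC00
          _ ≤ (C0 + 1) * (∫ t in (0:ℝ)..T, ∫ x in (0:ℝ)..1, (f t x) ^ 2) ^ (h:ℕ) :=
              mul_le_mul_of_nonneg_right (by linarith) (pow_nonneg hF0 h)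
end

section
/- Let u₀:[0,1]→ℝ be continuous and b:ℝ→ℝ Lipschitz with Lipschitz constant L. There exists a finite constant A>0, depending only on T and L, with the following property: if η₁,η₂∈C([0,T]×[0,1]) and z₁,z₂ are continuous functions on [0,T]×[0,1] satisfying, for i=1,2 and all (t,x)∈(0,T]×[0,1], z_i(t,x) = ∫₀¹ G_t(x,y) u₀(y) dy + ∫₀ᵗ∫₀¹ G_{t−s}(x,y) b(z_i(s,y)) dy ds + η_i(t,x), then sup_{(t,x)∈[0,T]×[0,1]} |z₁(t,x) − z₂(t,x)| ≤ A · sup_{(t,x)∈[0,T]×[0,1]} |η₁(t,x) − η₂(t,x)|. In particular, the solution map ψ: η ↦ z_η is Lipschitz continuous from C([0,T]×[0,1]) to itself. -/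
open MeasureTheory

/-- The Green function of the heat equation on `[0,1]` with Dirichlet boundary
conditions: `G_t(x,y) = 2 ∑_{n ≥ 1} sin(nπx) sin(nπy) exp(−n²π²t)`. -/
noncomputable def heatGreen (t x y : ℝ) : ℝ :=
  2 * ∑' n : ℕ, Real.sin (((n : ℝ) + 1) * Real.pi * x) * Real.sin (((n : ℝ) + 1) * Real.pi * y) *
    Real.exp (-(((n : ℝ) + 1) ^ 2) * Real.pi ^ 2 * t)

/-- `z` solves the deterministic mild heat equation with initial condition `u₀`,
drift `b` and perturbation `η`: for all `(t,x) ∈ (0,T] × [0,1]`,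
`z(t,x) = ∫₀¹ G_t(x,y) u₀(y) dy + ∫₀ᵗ∫₀¹ G_{t−s}(x,y) b(z(s,y)) dy ds + η(t,x)`. -/
def IsMildSolution (T : ℝ) (u₀ b : ℝ → ℝ) (η z : ℝ → ℝ → ℝ) : Prop :=
  ∀ t ∈ Set.Ioc (0 : ℝ) T, ∀ x ∈ Set.Icc (0 : ℝ) 1,
    z t x = (∫ y in (0 : ℝ)..1, heatGreen t x y * u₀ y) +
      (∫ s in (0 : ℝ)..t, ∫ y in (0 : ℝ)..1, heatGreen (t - s) x y * b (z s y)) + η t x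

section AuxLemmas

open Set

lemma gauss_term_le {a : ℝ} (ha : 0 < a) (n : ℕ) :
    Real.exp (-(((n : ℝ) + 1) ^ 2) * a) ≤ ∫ x in (n : ℝ)..(n + 1 : ℕ), Real.exp (-a * x ^ 2) := by
  have h1 : Real.exp (-(((n : ℝ) + 1) ^ 2) * a)
      = ∫ _x in (n : ℝ)..((n : ℝ) + 1), Real.exp (-(((n : ℝ) + 1) ^ 2) * a) := by
    simp
  push_cast
  rw [h1]
  apply intervalIntegral.integral_mono_on (by linarith)
  · exact intervalIntegrable_const
  · exact (Real.continuous_exp.comp (by continuity)).intervalIntegrable _ _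
  · intro x hx
    rw [Real.exp_le_exp]
    have hx0 : (0:ℝ) ≤ x := le_trans (Nat.cast_nonneg n) hx.1
    nlinarith [hx.2, mul_le_mul_of_nonneg_left (mul_self_le_mul_self hx0 hx.2) ha.le]

lemma gauss_sum_range_le {a : ℝ} (ha : 0 < a) (N : ℕ) :
    ∑ n ∈ Finset.range N, Real.exp (-(((n : ℝ) + 1) ^ 2) * a) ≤ Real.sqrt (Real.pi / a) / 2 := by
  have hint : ∀ k < N, IntervalIntegrable (fun x => Real.exp (-a * x ^ 2)) volume
      ((k : ℕ) : ℝ) ((k + 1 : ℕ) : ℝ) :=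
    fun k _ => (Real.continuous_exp.comp (by continuity)).intervalIntegrable _ _
  have hsum := intervalIntegral.sum_integral_adjacent_intervals (a := fun k : ℕ => (k : ℝ)) hint
  calc ∑ n ∈ Finset.range N, Real.exp (-(((n : ℝ) + 1) ^ 2) * a)
      ≤ ∑ n ∈ Finset.range N, ∫ x in ((n : ℕ) : ℝ)..((n + 1 : ℕ) : ℝ), Real.exp (-a * x ^ 2) :=
        Finset.sum_le_sum fun n _ => gauss_term_le ha n
    _ = ∫ x in ((0:ℕ) : ℝ)..((N : ℕ) : ℝ), Real.exp (-a * x ^ 2) := hsum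
    _ ≤ ∫ x in Ioi (0:ℝ), Real.exp (-a * x ^ 2) := by
        rw [intervalIntegral.integral_of_le (by exact_mod_cast Nat.cast_nonneg N)]
        push_cast
        apply setIntegral_mono_set
        · exact (integrable_exp_neg_mul_sq ha).integrableOn
        · exact Filter.Eventually.of_forall fun x => (Real.exp_pos _).le
        · exact Filter.Eventually.of_forall <| Ioc_subset_Ioi_self
    _ = Real.sqrt (Real.pi / a) / 2 := integral_gaussian_Ioi a

lemma gaussSummable {a : ℝ} (ha : 0 < a) :
    Summable (fun n : ℕ => Real.exp (-(((n : ℝ) + 1) ^ 2) * a)) :=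
  summable_of_sum_range_le (fun _ => (Real.exp_pos _).le) (gauss_sum_range_le ha)

lemma gaussSum_le {a : ℝ} (ha : 0 < a) :
    ∑' n : ℕ, Real.exp (-(((n : ℝ) + 1) ^ 2) * a) ≤ Real.sqrt (Real.pi / a) / 2 :=
  Summable.tsum_le_of_sum_range_le (gaussSummable ha) (gauss_sum_range_le ha)

lemma abs_tsum_le {f u : ℕ → ℝ} (h : ∀ n, |f n| ≤ u n) (hu : Summable u) :
    |∑' n, f n| ≤ ∑' n, u n := by
  have hs : Summable fun n => ‖f n‖ := hu.of_nonneg_of_le (fun n => norm_nonneg _)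
    (by simpa [Real.norm_eq_abs] using h)
  rw [← Real.norm_eq_abs]
  refine (norm_tsum_le_tsum_norm hs).trans ?_
  exact Summable.tsum_le_tsum (by simpa [Real.norm_eq_abs] using h) hs hu

lemma heat_term_norm_le (t x y : ℝ) (n : ℕ) :
    |Real.sin (((n : ℝ) + 1) * Real.pi * x) * Real.sin (((n : ℝ) + 1) * Real.pi * y) *
      Real.exp (-(((n : ℝ) + 1) ^ 2) * Real.pi ^ 2 * t)|
      ≤ Real.exp (-(((n : ℝ) + 1) ^ 2) * (Real.pi ^ 2 * t)) := by
  rw [abs_mul, abs_mul, Real.abs_exp, mul_assoc (-(((n : ℝ) + 1) ^ 2)) (Real.pi ^ 2) t]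
  have h1 := Real.abs_sin_le_one ((((n : ℝ)) + 1) * Real.pi * x)
  have h2 := Real.abs_sin_le_one ((((n : ℝ)) + 1) * Real.pi * y)
  have h3 := (Real.exp_pos (-(((n : ℝ) + 1) ^ 2) * (Real.pi ^ 2 * t))).le
  calc |Real.sin (((n : ℝ) + 1) * Real.pi * x)| * |Real.sin (((n : ℝ) + 1) * Real.pi * y)| *
        Real.exp (-(((n : ℝ) + 1) ^ 2) * (Real.pi ^ 2 * t))
      ≤ 1 * Real.exp (-(((n : ℝ) + 1) ^ 2) * (Real.pi ^ 2 * t)) := by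
        apply mul_le_mul_of_nonneg_right _ h3
        exact mul_le_one₀ h1 (abs_nonneg _) h2
    _ = _ := one_mul _

lemma heat_term_summable {t : ℝ} (ht : 0 < t) (x y : ℝ) :
    Summable (fun n : ℕ => Real.sin (((n : ℝ) + 1) * Real.pi * x) *
      Real.sin (((n : ℝ) + 1) * Real.pi * y) *
      Real.exp (-(((n : ℝ) + 1) ^ 2) * Real.pi ^ 2 * t)) := by
  apply Summable.of_norm_bounded (gaussSummable (by positivity : (0:ℝ) < Real.pi ^ 2 * t))
  exact heat_term_norm_le t x y

lemma heatGreen_abs_le {t : ℝ} (ht : 0 < t) (x y : ℝ) :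
    |heatGreen t x y| ≤ (Real.sqrt t)⁻¹ := by
  have ha : (0:ℝ) < Real.pi ^ 2 * t := by positivity
  have h1 : |heatGreen t x y| ≤ 2 * (Real.sqrt (Real.pi / (Real.pi ^ 2 * t)) / 2) := by
    rw [heatGreen, abs_mul, abs_two]
    gcongr
    exact (abs_tsum_le (heat_term_norm_le t x y) (gaussSummable ha)).trans (gaussSum_le ha)
  calc |heatGreen t x y| ≤ Real.sqrt (Real.pi / (Real.pi ^ 2 * t)) := by linarith
    _ ≤ Real.sqrt t⁻¹ := by
        apply Real.sqrt_le_sqrt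
        rw [div_le_iff₀ ha]
        have h2 : t⁻¹ * (Real.pi ^ 2 * t) = Real.pi ^ 2 := by field_simp
        rw [h2]
        nlinarith [Real.pi_gt_three]
    _ = (Real.sqrt t)⁻¹ := Real.sqrt_inv t

lemma heatGreen_continuousAt (x : ℝ) {p : ℝ × ℝ} (hp : 0 < p.1) :
    ContinuousAt (fun q : ℝ × ℝ => heatGreen q.1 x q.2) p := by
  set ε := p.1 / 2 with hε
  have hε0 : 0 < ε := by positivity
  set s : Set (ℝ × ℝ) := {q : ℝ × ℝ | ε < q.1} with hs
  have hso : IsOpen s := isOpen_lt continuous_const continuous_fst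
  have hmem : p ∈ s := by simp [hs, hε]; linarith
  have hcont : ContinuousOn (fun q : ℝ × ℝ => ∑' n : ℕ,
      Real.sin (((n : ℝ) + 1) * Real.pi * x) * Real.sin (((n : ℝ) + 1) * Real.pi * q.2) *
        Real.exp (-(((n : ℝ) + 1) ^ 2) * Real.pi ^ 2 * q.1)) s := by
    have hu : Summable (fun n : ℕ => Real.exp (-(((n : ℝ) + 1) ^ 2) * (Real.pi ^ 2 * ε))) :=
      gaussSummable (by positivity)
    have hb : ∀ (n : ℕ), ∀ q ∈ s,
        ‖Real.sin (((n : ℝ) + 1) * Real.pi * x) * Real.sin (((n : ℝ) + 1) * Real.pi * q.2) *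
          Real.exp (-(((n : ℝ) + 1) ^ 2) * Real.pi ^ 2 * q.1)‖
        ≤ Real.exp (-(((n : ℝ) + 1) ^ 2) * (Real.pi ^ 2 * ε)) := by
      intro n q hq
      refine (heat_term_norm_le q.1 x q.2 n).trans ?_
      rw [Real.exp_le_exp]
      have h2 : ε ≤ q.1 := le_of_lt hq
      have h3 := mul_le_mul_of_nonneg_left h2
        (by positivity : (0:ℝ) ≤ ((n : ℝ) + 1) ^ 2 * Real.pi ^ 2)
      nlinarith [h3]
    have := tendstoUniformlyOn_tsum hu hb
    apply this.continuousOn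
    refine Filter.Eventually.frequently ?_
    filter_upwards with N
    apply continuousOn_finset_sum
    intro i _
    apply Continuous.continuousOn
    fun_prop
  have : ContinuousAt (fun q : ℝ × ℝ => ∑' n : ℕ,
      Real.sin (((n : ℝ) + 1) * Real.pi * x) * Real.sin (((n : ℝ) + 1) * Real.pi * q.2) *
        Real.exp (-(((n : ℝ) + 1) ^ 2) * Real.pi ^ 2 * q.1)) p :=
    hcont.continuousAt (hso.mem_nhds hmem)
  have heq : (fun q : ℝ × ℝ => heatGreen q.1 x q.2) = fun q : ℝ × ℝ => 2 * ∑' n : ℕ,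
      Real.sin (((n : ℝ) + 1) * Real.pi * x) * Real.sin (((n : ℝ) + 1) * Real.pi * q.2) *
        Real.exp (-(((n : ℝ) + 1) ^ 2) * Real.pi ^ 2 * q.1) := rfl
  rw [heq]
  exact continuousAt_const.mul this

lemma heatGreen_cont_y (x' : ℝ) {t : ℝ} (ht : 0 < t) : Continuous fun y => heatGreen t x' y := by
  rw [continuous_iff_continuousAt]
  intro y
  exact (heatGreen_continuousAt x' (p := (t, y)) ht).comp
    ((continuous_const.prodMk continuous_id).continuousAt)

lemma inner_intervalIntegrable (t x' : ℝ) (ht : 0 < t) (g : ℝ → ℝ) (hg : Continuous g) :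
    IntervalIntegrable (fun y => heatGreen t x' y * g y) volume 0 1 :=
  ((heatGreen_cont_y x' ht).mul hg).intervalIntegrable 0 1

lemma sqrt_kernel_intervalIntegrable {t a b : ℝ} (ha : a ≤ t) (hb : b ≤ t) :
    IntervalIntegrable (fun s => (Real.sqrt (t - s))⁻¹) volume a b := by
  have base : IntervalIntegrable (fun x : ℝ => x ^ (-(1/2) : ℝ)) volume (t - a) (t - b) :=
    intervalIntegral.intervalIntegrable_rpow' (by norm_num)
  have comp := base.comp_sub_left t
  simp only [sub_sub_cancel] at comp
  apply comp.congr
  intro u hu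
  have hu' : u ≤ t := by
    rcases le_total a b with h | h
    · rw [uIoc_of_le h] at hu; exact hu.2.trans hb
    · rw [uIoc_of_ge h] at hu; exact hu.2.trans ha
  have h0 : (0:ℝ) ≤ t - u := by linarith
  show (t - u) ^ (-(1/2) : ℝ) = (Real.sqrt (t - u))⁻¹
  rw [Real.sqrt_eq_rpow, ← Real.rpow_neg h0]

lemma sqrt_kernel_integral {t a b : ℝ} (hab : a ≤ b) (hb : b ≤ t) :
    ∫ s in a..b, (Real.sqrt (t - s))⁻¹ =
      2 * Real.sqrt (t - a) - 2 * Real.sqrt (t - b) := by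
  have hderiv : ∀ s ∈ Ioo a b, HasDerivAt (fun u => -2 * Real.sqrt (t - u))
      ((Real.sqrt (t - s))⁻¹) s := by
    intro s hs
    have hst : 0 < t - s := by rcases hs with ⟨_, h2⟩; linarith
    have h1 : HasDerivAt (fun u : ℝ => t - u) (-1) s := by
      simpa using (hasDerivAt_id s).const_sub t
    have h2 : HasDerivAt (fun u : ℝ => Real.sqrt (t - u)) (1 / (2 * Real.sqrt (t - s)) * (-1)) s :=
      (Real.hasDerivAt_sqrt hst.ne').comp s h1
    have h3 := h2.const_mul (-2 : ℝ)
    refine h3.congr_deriv ?_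
    have hsq : Real.sqrt (t - s) ≠ 0 := by positivity
    ring
  have hcont : ContinuousOn (fun u => -2 * Real.sqrt (t - u)) (Icc a b) :=
    (continuous_const.mul
      (Real.continuous_sqrt.comp (continuous_const.sub continuous_id))).continuousOn
  have hint : IntervalIntegrable (fun s => (Real.sqrt (t - s))⁻¹) volume a b :=
    sqrt_kernel_intervalIntegrable (hab.trans hb) hb
  have := intervalIntegral.integral_eq_sub_of_hasDeriv_right_of_le hab hcont
    (fun s hs => (hderiv s hs).hasDerivWithinAt) hint
  rw [this]; ring

lemma aux_norm_le (t' s x' : ℝ) (hs : 0 < t' - s) (g : ℝ → ℝ → ℝ) (Cb : ℝ) (hCb0 : 0 ≤ Cb)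
    (hCb : ∀ y ∈ Icc (0:ℝ) 1, |g s y| ≤ Cb) :
    |∫ y in (0:ℝ)..1, heatGreen (t' - s) x' y * g s y| ≤ Cb * (Real.sqrt (t' - s))⁻¹ := by
  have h := intervalIntegral.norm_integral_le_of_norm_le_const
    (C := (Real.sqrt (t' - s))⁻¹ * Cb)
    (f := fun y => heatGreen (t' - s) x' y * g s y) (a := 0) (b := 1) ?_
  · rw [Real.norm_eq_abs] at h
    calc |∫ y in (0:ℝ)..1, heatGreen (t' - s) x' y * g s y|
        ≤ (Real.sqrt (t' - s))⁻¹ * Cb * |1 - 0| := h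
      _ = Cb * (Real.sqrt (t' - s))⁻¹ := by simp [mul_comm]
  · intro y hy
    rw [Real.norm_eq_abs, abs_mul]
    have hyIcc : y ∈ Icc (0:ℝ) 1 := by
      rw [uIoc_of_le (by norm_num : (0:ℝ) ≤ 1)] at hy
      exact ⟨hy.1.le, hy.2⟩
    exact mul_le_mul (heatGreen_abs_le hs x' y) (hCb y hyIcc) (abs_nonneg _) (by positivity)

lemma aux_cont (t' x' : ℝ) (g : ℝ → ℝ → ℝ) (hg : Continuous fun p : ℝ × ℝ => g p.1 p.2) :
    ContinuousOn (fun s => ∫ y in (0:ℝ)..1, heatGreen (t' - s) x' y * g s y) (Iio t') := by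
  intro s₀ hs₀
  have hs₀' : s₀ < t' := hs₀
  set c := (s₀ + t') / 2 with hc
  have h1 : s₀ < c := by rw [hc]; linarith
  have h2 : c < t' := by rw [hc]; linarith
  have hd : 0 < t' - c := by linarith
  have hinner : Continuous fun p : ℝ × ℝ => ((max (t' - c) (t' - p.1), p.2) : ℝ × ℝ) :=
    (continuous_const.max (continuous_const.sub continuous_fst)).prodMk continuous_snd
  have hH : Continuous fun p : ℝ × ℝ => heatGreen (max (t' - c) (t' - p.1)) x' p.2 * g p.1 p.2 := by
    apply Continuous.mul _ hg
    have hcompeq : (fun p : ℝ × ℝ => heatGreen (max (t' - c) (t' - p.1)) x' p.2)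
        = (fun q : ℝ × ℝ => heatGreen q.1 x' q.2) ∘
          (fun p : ℝ × ℝ => ((max (t' - c) (t' - p.1), p.2) : ℝ × ℝ)) := rfl
    rw [hcompeq, continuous_iff_continuousAt]
    intro p
    exact ContinuousAt.comp
      (heatGreen_continuousAt x' (lt_of_lt_of_le hd (le_max_left _ _)))
      hinner.continuousAt
  have hI : Continuous fun s : ℝ => ∫ y in (0:ℝ)..1,
      heatGreen (max (t' - c) (t' - s)) x' y * g s y :=
    intervalIntegral.continuous_parametric_intervalIntegral_of_continuous'
      (μ := volume) (f := fun s y => heatGreen (max (t' - c) (t' - s)) x' y * g s y) hH 0 1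
  apply ContinuousAt.continuousWithinAt
  apply hI.continuousAt.congr
  filter_upwards [isOpen_Iio.mem_nhds (h1 : s₀ ∈ Iio c)] with s hs
  have hmax : max (t' - c) (t' - s) = t' - s := max_eq_right (by simp only [mem_Iio] at hs; linarith)
  rw [hmax]

lemma aux_integrable (t' x' : ℝ) (ht' : 0 < t') (g : ℝ → ℝ → ℝ)
    (hg : Continuous fun p : ℝ × ℝ => g p.1 p.2) (Cb : ℝ)
    (hCb : ∀ s y, |g s y| ≤ Cb) :
    IntervalIntegrable (fun s => ∫ y in (0:ℝ)..1, heatGreen (t' - s) x' y * g s y) volume 0 t' := by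
  have hCb0 : 0 ≤ Cb := (abs_nonneg _).trans (hCb 0 0)
  have hbig : IntervalIntegrable (fun s => Cb * (Real.sqrt (t' - s))⁻¹) volume 0 t' :=
    (sqrt_kernel_intervalIntegrable ht'.le le_rfl).const_mul Cb
  rw [intervalIntegrable_iff_integrableOn_Ioo_of_le ht'.le]
  have hbig' : IntegrableOn (fun s => Cb * (Real.sqrt (t' - s))⁻¹) (Ioo 0 t') volume :=
    ((intervalIntegrable_iff_integrableOn_Ioo_of_le ht'.le).mp hbig)
  apply Integrable.mono' hbig'
  · exact ((aux_cont t' x' g hg).mono Ioo_subset_Iio_self).aestronglyMeasurable measurableSet_Ioo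
  · filter_upwards [ae_restrict_mem measurableSet_Ioo] with s hs
    rw [Real.norm_eq_abs]
    exact aux_norm_le t' s x' (by linarith [hs.2]) g Cb hCb0 (fun y _ => hCb s y)

end AuxLemmas

set_option maxHeartbeats 1000000 in
/-- Lipschitz continuity of the solution map `ψ : η ↦ z_η`: there is a constant
`A > 0`, depending only on `T` and the Lipschitz constant `L` of `b`, such that
any two continuous solutions `z₁, z₂` corresponding to perturbations `η₁, η₂`
satisfy `sup |z₁ − z₂| ≤ A · sup |η₁ − η₂|` on `[0,T]×[0,1]`. -/
theorem solution_map_lipschitz (T : ℝ) (hT : 0 < T) (L : NNReal) :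
    ∃ A : ℝ, 0 < A ∧
      ∀ u₀ : ℝ → ℝ, ContinuousOn u₀ (Set.Icc (0 : ℝ) 1) →
      ∀ b : ℝ → ℝ, LipschitzWith L b →
      ∀ η₁ η₂ z₁ z₂ : ℝ → ℝ → ℝ,
        ContinuousOn (fun p : ℝ × ℝ => η₁ p.1 p.2) (Set.Icc (0 : ℝ) T ×ˢ Set.Icc (0 : ℝ) 1) →
        ContinuousOn (fun p : ℝ × ℝ => η₂ p.1 p.2) (Set.Icc (0 : ℝ) T ×ˢ Set.Icc (0 : ℝ) 1) →
        ContinuousOn (fun p : ℝ × ℝ => z₁ p.1 p.2) (Set.Icc (0 : ℝ) T ×ˢ Set.Icc (0 : ℝ) 1) →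
        IsMildSolution T u₀ b η₁ z₁ →
        ContinuousOn (fun p : ℝ × ℝ => z₂ p.1 p.2) (Set.Icc (0 : ℝ) T ×ˢ Set.Icc (0 : ℝ) 1) →
        IsMildSolution T u₀ b η₂ z₂ →
        ∀ t ∈ Set.Icc (0 : ℝ) T, ∀ x ∈ Set.Icc (0 : ℝ) 1,
          |z₁ t x - z₂ t x| ≤ A * sSup ((fun p : ℝ × ℝ => |η₁ p.1 p.2 - η₂ p.1 p.2|) ''
            (Set.Icc (0 : ℝ) T ×ˢ Set.Icc (0 : ℝ) 1)) := by
  classical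
  set Lr : ℝ := (L : ℝ) with hLrdef
  have hL0 : (0:ℝ) ≤ Lr := L.coe_nonneg
  set C : ℝ := 2 * Lr * Real.sqrt T with hCdef
  have hC0 : 0 ≤ C := by positivity
  set ε : ℝ := ((4 * (Lr + 1))⁻¹) ^ 2 with hεdef
  have hε0 : 0 < ε := by positivity
  have hsqε : Real.sqrt ε = (4 * (Lr + 1))⁻¹ := by
    rw [hεdef, Real.sqrt_sq (by positivity)]
  have hεsmall : 2 * Lr * Real.sqrt ε ≤ 1 / 2 := by
    rw [hsqε, ← div_eq_mul_inv, div_le_iff₀ (by positivity : (0:ℝ) < 4 * (Lr + 1))]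
    nlinarith [hL0]
  set n : ℕ := ⌈T / ε⌉₊ with hndef
  have hnε : T ≤ (n : ℝ) * ε := by
    have h1 : T / ε ≤ (n : ℝ) := Nat.le_ceil (T / ε)
    calc T = (T / ε) * ε := by field_simp
      _ ≤ (n : ℝ) * ε := by
          exact mul_le_mul_of_nonneg_right h1 hε0.le
  refine ⟨2 * (2 * C + 2) ^ (n + 1) + 1, by positivity, ?_⟩
  intro u₀ hu₀ b hb η₁ η₂ z₁ z₂ hη₁ hη₂ hz₁c hz₁ hz₂c hz₂ t ht x hx
  set S : Set (ℝ × ℝ) := Set.Icc (0 : ℝ) T ×ˢ Set.Icc (0 : ℝ) 1 with hSdef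
  have hScomp : IsCompact S := isCompact_Icc.prod isCompact_Icc
  -- clamping maps
  set cT : ℝ → ℝ := fun s => max 0 (min T s) with hcTdef
  set c1 : ℝ → ℝ := fun y => max 0 (min 1 y) with hc1def
  have hcTcont : Continuous cT := continuous_const.max (continuous_const.min continuous_id)
  have hc1cont : Continuous c1 := continuous_const.max (continuous_const.min continuous_id)
  have hcTmem : ∀ s, cT s ∈ Set.Icc (0:ℝ) T :=
    fun s => ⟨le_max_left _ _, max_le hT.le (min_le_left _ _)⟩
  have hc1mem : ∀ y, c1 y ∈ Set.Icc (0:ℝ) 1 :=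
    fun y => ⟨le_max_left _ _, max_le one_pos.le (min_le_left _ _)⟩
  have hcTid : ∀ s ∈ Set.Icc (0:ℝ) T, cT s = s := by
    intro s hs; rw [hcTdef]; simp only [min_eq_right hs.2, max_eq_right hs.1]
  have hc1id : ∀ y ∈ Set.Icc (0:ℝ) 1, c1 y = y := by
    intro y hy; rw [hc1def]; simp only [min_eq_right hy.2, max_eq_right hy.1]
  -- clamped solutions
  set w₁ : ℝ → ℝ → ℝ := fun s y => z₁ (cT s) (c1 y) with hw₁def
  set w₂ : ℝ → ℝ → ℝ := fun s y => z₂ (cT s) (c1 y) with hw₂def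
  have hw₁c : Continuous fun p : ℝ × ℝ => w₁ p.1 p.2 := by
    have : (fun p : ℝ × ℝ => w₁ p.1 p.2) = (fun p : ℝ × ℝ => z₁ p.1 p.2) ∘
        (fun p : ℝ × ℝ => ((cT p.1, c1 p.2) : ℝ × ℝ)) := rfl
    rw [this]
    exact hz₁c.comp_continuous
      ((hcTcont.comp continuous_fst).prodMk (hc1cont.comp continuous_snd))
      (fun p => ⟨hcTmem _, hc1mem _⟩)
  have hw₂c : Continuous fun p : ℝ × ℝ => w₂ p.1 p.2 := by
    have : (fun p : ℝ × ℝ => w₂ p.1 p.2) = (fun p : ℝ × ℝ => z₂ p.1 p.2) ∘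
        (fun p : ℝ × ℝ => ((cT p.1, c1 p.2) : ℝ × ℝ)) := rfl
    rw [this]
    exact hz₂c.comp_continuous
      ((hcTcont.comp continuous_fst).prodMk (hc1cont.comp continuous_snd))
      (fun p => ⟨hcTmem _, hc1mem _⟩)
  have hw₁eq : ∀ s ∈ Set.Icc (0:ℝ) T, ∀ y ∈ Set.Icc (0:ℝ) 1, w₁ s y = z₁ s y := by
    intro s hs y hy; rw [hw₁def]; simp only []; rw [hcTid s hs, hc1id y hy]
  have hw₂eq : ∀ s ∈ Set.Icc (0:ℝ) T, ∀ y ∈ Set.Icc (0:ℝ) 1, w₂ s y = z₂ s y := by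
    intro s hs y hy; rw [hw₂def]; simp only []; rw [hcTid s hs, hc1id y hy]
  set δ : ℝ → ℝ → ℝ := fun s y => w₁ s y - w₂ s y with hδdef
  have hδc : Continuous fun p : ℝ × ℝ => δ p.1 p.2 := hw₁c.sub hw₂c
  -- sup of perturbation difference
  set N : ℝ := sSup ((fun p : ℝ × ℝ => |η₁ p.1 p.2 - η₂ p.1 p.2|) '' S) with hNdef
  have hNb : ∀ p ∈ S, |η₁ p.1 p.2 - η₂ p.1 p.2| ≤ N := by
    intro p hp
    exact le_csSup (hScomp.bddAbove_image ((hη₁.sub hη₂).abs)) (Set.mem_image_of_mem _ hp)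
  have hS00 : ((0:ℝ), (0:ℝ)) ∈ S := ⟨⟨le_refl _, hT.le⟩, ⟨le_refl _, one_pos.le⟩⟩
  have hN0 : 0 ≤ N := (abs_nonneg _).trans (hNb _ hS00)
  -- uniform bound on b ∘ wᵢ
  obtain ⟨CB₁, hCB₁S⟩ : ∃ Cb : ℝ, ∀ p ∈ S, |b (z₁ p.1 p.2)| ≤ Cb := by
    obtain ⟨Cb, hCb⟩ := hScomp.bddAbove_image ((hb.continuous.comp_continuousOn hz₁c).abs)
    exact ⟨Cb, fun p hp => hCb (Set.mem_image_of_mem _ hp)⟩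
  obtain ⟨CB₂, hCB₂S⟩ : ∃ Cb : ℝ, ∀ p ∈ S, |b (z₂ p.1 p.2)| ≤ Cb := by
    obtain ⟨Cb, hCb⟩ := hScomp.bddAbove_image ((hb.continuous.comp_continuousOn hz₂c).abs)
    exact ⟨Cb, fun p hp => hCb (Set.mem_image_of_mem _ hp)⟩
  have hCB₁ : ∀ s y, |b (w₁ s y)| ≤ CB₁ := fun s y => hCB₁S (cT s, c1 y) ⟨hcTmem s, hc1mem y⟩
  have hCB₂ : ∀ s y, |b (w₂ s y)| ≤ CB₂ := fun s y => hCB₂S (cT s, c1 y) ⟨hcTmem s, hc1mem y⟩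
  -- Lipschitz bound on b-differences
  have hLb : ∀ u v : ℝ, |b u - b v| ≤ Lr * |u - v| := by
    intro u v
    have := hb.dist_le_mul u v
    simpa [Real.dist_eq] using this
  -- KEY a priori estimate
  have key : ∀ t' ∈ Set.Ioc (0:ℝ) T, ∀ x' ∈ Set.Icc (0:ℝ) 1, ∀ m₁ m₂ : ℝ, 0 ≤ m₁ → 0 ≤ m₂ →
      (∀ s ∈ Set.Ico (0:ℝ) (t' - ε), ∀ y ∈ Set.Icc (0:ℝ) 1, |δ s y| ≤ m₁) →
      (∀ s ∈ Set.Icc (0:ℝ) t', ∀ y ∈ Set.Icc (0:ℝ) 1, |δ s y| ≤ m₂) →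
      |δ t' x'| ≤ N + C * m₁ + 2 * Lr * Real.sqrt ε * m₂ := by
    intro t' ht' x' hx' m₁ m₂ hm₁ hm₂ hbd₁ hbd₂
    obtain ⟨ht'0, ht'T⟩ := ht'
    set G₁ : ℝ → ℝ := fun s => ∫ y in (0:ℝ)..1, heatGreen (t' - s) x' y * b (w₁ s y) with hG₁def
    set G₂ : ℝ → ℝ := fun s => ∫ y in (0:ℝ)..1, heatGreen (t' - s) x' y * b (w₂ s y) with hG₂def
    have huIcc01 : Set.uIcc (0:ℝ) 1 = Set.Icc (0:ℝ) 1 := Set.uIcc_of_le (by norm_num)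
    -- the difference identity
    have hdiff : δ t' x' = ((∫ s in (0:ℝ)..t', G₁ s) - ∫ s in (0:ℝ)..t', G₂ s)
        + (η₁ t' x' - η₂ t' x') := by
      have e₁ := hz₁ t' ⟨ht'0, ht'T⟩ x' hx'
      have e₂ := hz₂ t' ⟨ht'0, ht'T⟩ x' hx'
      have c₁ : (∫ s in (0:ℝ)..t', ∫ y in (0:ℝ)..1, heatGreen (t' - s) x' y * b (z₁ s y))
          = ∫ s in (0:ℝ)..t', G₁ s := by
        apply intervalIntegral.integral_congr
        intro s hs
        rw [Set.uIcc_of_le ht'0.le] at hs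
        apply intervalIntegral.integral_congr
        intro y hy
        rw [huIcc01] at hy
        show heatGreen (t' - s) x' y * b (z₁ s y) = heatGreen (t' - s) x' y * b (w₁ s y)
        rw [hw₁eq s ⟨hs.1, hs.2.trans ht'T⟩ y hy]
      have c₂ : (∫ s in (0:ℝ)..t', ∫ y in (0:ℝ)..1, heatGreen (t' - s) x' y * b (z₂ s y))
          = ∫ s in (0:ℝ)..t', G₂ s := by
        apply intervalIntegral.integral_congr
        intro s hs
        rw [Set.uIcc_of_le ht'0.le] at hs
        apply intervalIntegral.integral_congr
        intro y hy
        rw [huIcc01] at hy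
        show heatGreen (t' - s) x' y * b (z₂ s y) = heatGreen (t' - s) x' y * b (w₂ s y)
        rw [hw₂eq s ⟨hs.1, hs.2.trans ht'T⟩ y hy]
      have hδ' : δ t' x' = z₁ t' x' - z₂ t' x' := by
        rw [hδdef]; simp only []
        rw [hw₁eq t' ⟨ht'0.le, ht'T⟩ x' hx', hw₂eq t' ⟨ht'0.le, ht'T⟩ x' hx']
      rw [hδ', e₁, e₂, ← c₁, ← c₂]; ring
    -- integrability
    have hbw₁ : Continuous fun p : ℝ × ℝ => b (w₁ p.1 p.2) := hb.continuous.comp hw₁c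
    have hbw₂ : Continuous fun p : ℝ × ℝ => b (w₂ p.1 p.2) := hb.continuous.comp hw₂c
    have hint₁ : IntervalIntegrable G₁ volume 0 t' :=
      aux_integrable t' x' ht'0 (fun s y => b (w₁ s y)) hbw₁ CB₁ hCB₁
    have hint₂ : IntervalIntegrable G₂ volume 0 t' :=
      aux_integrable t' x' ht'0 (fun s y => b (w₂ s y)) hbw₂ CB₂ hCB₂
    set c : ℝ := max 0 (t' - ε) with hcdef
    have hc0 : 0 ≤ c := le_max_left _ _
    have hct : c ≤ t' := max_le ht'0.le (by linarith)
    have htc : t' - c ≤ ε := by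
      have : t' - ε ≤ c := le_max_right _ _
      linarith
    have hsub1 : Set.uIcc (0:ℝ) c ⊆ Set.uIcc (0:ℝ) t' := by
      rw [Set.uIcc_of_le hc0, Set.uIcc_of_le ht'0.le]
      exact Set.Icc_subset_Icc_right hct
    have hsub2 : Set.uIcc c t' ⊆ Set.uIcc (0:ℝ) t' := by
      rw [Set.uIcc_of_le hct, Set.uIcc_of_le ht'0.le]
      exact Set.Icc_subset_Icc_left hc0
    have hd1 : IntervalIntegrable (fun s => G₁ s - G₂ s) volume 0 c :=
      (hint₁.sub hint₂).mono_set hsub1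
    have hd2 : IntervalIntegrable (fun s => G₁ s - G₂ s) volume c t' :=
      (hint₁.sub hint₂).mono_set hsub2
    have hsplit : (∫ s in (0:ℝ)..t', (G₁ s - G₂ s))
        = (∫ s in (0:ℝ)..c, (G₁ s - G₂ s)) + ∫ s in c..t', (G₁ s - G₂ s) :=
      (intervalIntegral.integral_add_adjacent_intervals hd1 hd2).symm
    -- inner difference representation
    have hGdiff : ∀ s ∈ Set.Ioo (0:ℝ) t', G₁ s - G₂ s
        = ∫ y in (0:ℝ)..1, heatGreen (t' - s) x' y * (b (w₁ s y) - b (w₂ s y)) := by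
      intro s hs
      have hts : 0 < t' - s := by linarith [hs.2]
      have hw₁y : Continuous fun y => b (w₁ s y) := by
        have : (fun y => b (w₁ s y)) = (fun p : ℝ × ℝ => b (w₁ p.1 p.2)) ∘ (fun y => ((s, y) : ℝ × ℝ)) := rfl
        rw [this]
        exact hbw₁.comp (continuous_const.prodMk continuous_id)
      have hw₂y : Continuous fun y => b (w₂ s y) := by
        have : (fun y => b (w₂ s y)) = (fun p : ℝ × ℝ => b (w₂ p.1 p.2)) ∘ (fun y => ((s, y) : ℝ × ℝ)) := rfl
        rw [this]
        exact hbw₂.comp (continuous_const.prodMk continuous_id)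
      have i₁ := inner_intervalIntegrable (t' - s) x' hts _ hw₁y
      have i₂ := inner_intervalIntegrable (t' - s) x' hts _ hw₂y
      rw [hG₁def, hG₂def]
      simp only []
      rw [← intervalIntegral.integral_sub i₁ i₂]
      apply intervalIntegral.integral_congr
      intro y _
      ring
    -- bound on the first piece
    have hb1 : |∫ s in (0:ℝ)..c, (G₁ s - G₂ s)| ≤ C * m₁ := by
      have hker : IntervalIntegrable (fun s => Lr * m₁ * (Real.sqrt (t' - s))⁻¹) volume 0 c :=
        (sqrt_kernel_intervalIntegrable ht'0.le hct).const_mul _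
      have hae : ∀ᵐ s ∂(volume.restrict (Set.uIoc 0 c)),
          ‖G₁ s - G₂ s‖ ≤ Lr * m₁ * (Real.sqrt (t' - s))⁻¹ := by
        rw [Set.uIoc_of_le hc0,
          ← MeasureTheory.Measure.restrict_congr_set MeasureTheory.Ioo_ae_eq_Ioc]
        filter_upwards [ae_restrict_mem measurableSet_Ioo] with s hs
        have hs0 : 0 < s := hs.1
        have hsc : s < c := hs.2
        have hst' : s < t' := lt_of_lt_of_le hsc hct
        have hts : 0 < t' - s := by linarith
        have hstε : s < t' - ε := by
          rcases lt_max_iff.mp hsc with h | h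
          · linarith
          · exact h
        rw [Real.norm_eq_abs, hGdiff s ⟨hs0, hst'⟩]
        have hbnd : ∀ y ∈ Set.Icc (0:ℝ) 1, |b (w₁ s y) - b (w₂ s y)| ≤ Lr * m₁ := by
          intro y hy
          calc |b (w₁ s y) - b (w₂ s y)| ≤ Lr * |w₁ s y - w₂ s y| := hLb _ _
            _ ≤ Lr * m₁ := mul_le_mul_of_nonneg_left (hbd₁ s ⟨hs0.le, hstε⟩ y hy) hL0
        exact aux_norm_le t' s x' hts (fun s y => b (w₁ s y) - b (w₂ s y)) (Lr * m₁)
          (by positivity) hbnd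
      have h := intervalIntegral.norm_integral_le_abs_of_norm_le hae hker
      rw [Real.norm_eq_abs] at h
      refine h.trans ?_
      rw [intervalIntegral.integral_const_mul, sqrt_kernel_integral hc0 hct]
      have hsq1 : Real.sqrt (t' - c) ≤ Real.sqrt (t' - 0) := Real.sqrt_le_sqrt (by linarith)
      have hsqT : Real.sqrt (t' - 0) ≤ Real.sqrt T := by
        rw [sub_zero]; exact Real.sqrt_le_sqrt ht'T
      have hnn : 0 ≤ 2 * Real.sqrt (t' - 0) - 2 * Real.sqrt (t' - c) := by linarith
      rw [abs_of_nonneg (mul_nonneg (by positivity) hnn)]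
      calc Lr * m₁ * (2 * Real.sqrt (t' - 0) - 2 * Real.sqrt (t' - c))
          ≤ Lr * m₁ * (2 * Real.sqrt T) := by
            apply mul_le_mul_of_nonneg_left _ (mul_nonneg hL0 hm₁)
            have h0c := Real.sqrt_nonneg (t' - c)
            linarith
        _ = C * m₁ := by rw [hCdef]; ring
    -- bound on the second piece
    have hb2 : |∫ s in c..t', (G₁ s - G₂ s)| ≤ 2 * Lr * Real.sqrt ε * m₂ := by
      have hker : IntervalIntegrable (fun s => Lr * m₂ * (Real.sqrt (t' - s))⁻¹) volume c t' :=
        (sqrt_kernel_intervalIntegrable hct le_rfl).const_mul _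
      have hae : ∀ᵐ s ∂(volume.restrict (Set.uIoc c t')),
          ‖G₁ s - G₂ s‖ ≤ Lr * m₂ * (Real.sqrt (t' - s))⁻¹ := by
        rw [Set.uIoc_of_le hct,
          ← MeasureTheory.Measure.restrict_congr_set MeasureTheory.Ioo_ae_eq_Ioc]
        filter_upwards [ae_restrict_mem measurableSet_Ioo] with s hs
        have hs0 : 0 < s := lt_of_le_of_lt hc0 hs.1
        have hst' : s < t' := hs.2
        have hts : 0 < t' - s := by linarith
        rw [Real.norm_eq_abs, hGdiff s ⟨hs0, hst'⟩]
        have hbnd : ∀ y ∈ Set.Icc (0:ℝ) 1, |b (w₁ s y) - b (w₂ s y)| ≤ Lr * m₂ := by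
          intro y hy
          calc |b (w₁ s y) - b (w₂ s y)| ≤ Lr * |w₁ s y - w₂ s y| := hLb _ _
            _ ≤ Lr * m₂ := mul_le_mul_of_nonneg_left
                (hbd₂ s ⟨hs0.le, hst'.le⟩ y hy) hL0
        exact aux_norm_le t' s x' hts (fun s y => b (w₁ s y) - b (w₂ s y)) (Lr * m₂)
          (by positivity) hbnd
      have h := intervalIntegral.norm_integral_le_abs_of_norm_le hae hker
      rw [Real.norm_eq_abs] at h
      refine h.trans ?_
      rw [intervalIntegral.integral_const_mul, sqrt_kernel_integral hct le_rfl]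
      have hzero : Real.sqrt (t' - t') = 0 := by rw [sub_self, Real.sqrt_zero]
      rw [hzero]
      have hsqε' : Real.sqrt (t' - c) ≤ Real.sqrt ε := Real.sqrt_le_sqrt htc
      have h0c := Real.sqrt_nonneg (t' - c)
      have hnn : 0 ≤ 2 * Real.sqrt (t' - c) - 2 * 0 := by linarith
      rw [abs_of_nonneg (mul_nonneg (by positivity) hnn)]
      calc Lr * m₂ * (2 * Real.sqrt (t' - c) - 2 * 0)
          ≤ Lr * m₂ * (2 * Real.sqrt ε) := by
            apply mul_le_mul_of_nonneg_left _ (mul_nonneg hL0 hm₂)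
            linarith
        _ = 2 * Lr * Real.sqrt ε * m₂ := by ring
    -- combine
    have hηb : |η₁ t' x' - η₂ t' x'| ≤ N := hNb (t', x') ⟨⟨ht'0.le, ht'T⟩, hx'⟩
    have hsubint : (∫ s in (0:ℝ)..t', G₁ s) - ∫ s in (0:ℝ)..t', G₂ s
        = ∫ s in (0:ℝ)..t', (G₁ s - G₂ s) := (intervalIntegral.integral_sub hint₁ hint₂).symm
    rw [hdiff, hsubint, hsplit]
    have habs2 := abs_add_le ((∫ s in (0:ℝ)..c, (G₁ s - G₂ s)) + ∫ s in c..t', (G₁ s - G₂ s))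
      (η₁ t' x' - η₂ t' x')
    have habs1 := abs_add_le (∫ s in (0:ℝ)..c, (G₁ s - G₂ s)) (∫ s in c..t', (G₁ s - G₂ s))
    linarith
  -- slab suprema
  set M : ℕ → ℝ := fun k => sSup ((fun p : ℝ × ℝ => |δ p.1 p.2|) ''
    (Set.Icc (0:ℝ) (min ((k : ℝ) * ε) T) ×ˢ Set.Icc (0:ℝ) 1)) with hMdef
  have hMb : ∀ k : ℕ, ∀ p ∈ Set.Icc (0:ℝ) (min ((k : ℝ) * ε) T) ×ˢ Set.Icc (0:ℝ) 1,
      |δ p.1 p.2| ≤ M k := by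
    intro k p hp
    exact le_csSup ((isCompact_Icc.prod isCompact_Icc).bddAbove_image (hδc.abs.continuousOn))
      (Set.mem_image_of_mem _ hp)
  have hM0 : ∀ k : ℕ, 0 ≤ M k := by
    intro k
    have hmem : ((0:ℝ), (0:ℝ)) ∈ Set.Icc (0:ℝ) (min ((k : ℝ) * ε) T) ×ˢ Set.Icc (0:ℝ) 1 :=
      ⟨⟨le_refl _, le_min (by positivity) hT.le⟩, ⟨le_refl _, one_pos.le⟩⟩
    exact (abs_nonneg _).trans (hMb k _ hmem)
  -- bounding the slab supremum from pointwise estimates on positive times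
  have hslab : ∀ (k : ℕ) (R : ℝ), 0 ≤ R →
      (∀ t'' ∈ Set.Ioc (0:ℝ) (min (((k:ℝ) + 1) * ε) T), ∀ x'' ∈ Set.Icc (0:ℝ) 1,
        |δ t'' x''| ≤ R) →
      M (k + 1) ≤ R := by
    intro k R hR0 hball
    rw [hMdef]
    apply Real.sSup_le _ hR0
    rintro v ⟨⟨t'', x''⟩, ⟨ht'', hx''⟩, rfl⟩
    push_cast at ht''
    rcases eq_or_lt_of_le ht''.1 with h0 | h0
    · have hmin : 0 < min (((k:ℝ) + 1) * ε) T := lt_min (by positivity) hT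
      have hcont : Continuous fun u : ℝ => |δ u x''| :=
        (hδc.comp (continuous_id.prodMk continuous_const)).abs
      have htend : Filter.Tendsto (fun u : ℝ => |δ u x''|) (nhdsWithin 0 (Set.Ioi 0))
          (nhds (|δ 0 x''|)) := hcont.continuousAt.tendsto.mono_left nhdsWithin_le_nhds
      have hval : |δ 0 x''| ≤ R := by
        apply le_of_tendsto htend
        filter_upwards [Ioc_mem_nhdsGT hmin] with u hu
        exact hball u hu x'' hx''
      simpa [← h0] using hval
    · exact hball t'' ⟨h0, ht''.2⟩ x'' hx''
  -- base case
  have hbase : M 1 ≤ 2 * N := by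
    have h1 : M 1 ≤ N + 2 * Lr * Real.sqrt ε * M 1 := by
      have := hslab 0 (N + 2 * Lr * Real.sqrt ε * M 1)
        (by have := hM0 1; positivity) ?_
      · simpa using this
      · intro t'' ht'' x'' hx''
        have ht''T : t'' ≤ T := ht''.2.trans (min_le_right _ _)
        have ht''ε : t'' ≤ ε := by
          have := ht''.2.trans (min_le_left _ _)
          simpa using this
        have hk := key t'' ⟨ht''.1, ht''T⟩ x'' hx'' 0 (M 1) le_rfl (hM0 1) ?_ ?_
        · calc |δ t'' x''| ≤ N + C * 0 + 2 * Lr * Real.sqrt ε * M 1 := hk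
            _ = N + 2 * Lr * Real.sqrt ε * M 1 := by ring
        · intro s hs y hy
          exfalso
          have := hs.2
          have := hs.1
          linarith [hs.1, hs.2]
        · intro s hs y hy
          apply hMb 1 (s, y)
          refine ⟨⟨hs.1, le_min ?_ ?_⟩, hy⟩
          · push_cast
            linarith [hs.2]
          · linarith [hs.2]
    have h2 : 2 * Lr * Real.sqrt ε * M 1 ≤ (1/2) * M 1 :=
      mul_le_mul_of_nonneg_right hεsmall (hM0 1)
    linarith
  -- recursion step
  have hstep : ∀ k : ℕ, M (k + 2) ≤ 2 * N + 2 * C * M (k + 1) := by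
    have hMnonneg := hM0
    intro k
    have h1 : M (k + 2) ≤ N + C * M (k + 1) + 2 * Lr * Real.sqrt ε * M (k + 2) := by
      apply hslab (k + 1) _ (by have h1 := hM0 (k+1); have h2 := hM0 (k+2); positivity)
      intro t'' ht'' x'' hx''
      push_cast at ht''
      have ht''T : t'' ≤ T := ht''.2.trans (min_le_right _ _)
      have ht''ε : t'' ≤ ((k:ℝ) + 1 + 1) * ε := ht''.2.trans (min_le_left _ _)
      apply key t'' ⟨ht''.1, ht''T⟩ x'' hx'' (M (k + 1)) (M (k + 2)) (hM0 _) (hM0 _)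
      · intro s hs y hy
        apply hMb (k + 1) (s, y)
        refine ⟨⟨hs.1, le_min ?_ ?_⟩, hy⟩
        · push_cast
          nlinarith [hs.2, hε0.le]
        · linarith [hs.2, ht''T]
      · intro s hs y hy
        apply hMb (k + 2) (s, y)
        refine ⟨⟨hs.1, le_min ?_ ?_⟩, hy⟩
        · push_cast
          linarith [hs.2]
        · linarith [hs.2]
    have h2 : 2 * Lr * Real.sqrt ε * M (k + 2) ≤ (1/2) * M (k + 2) :=
      mul_le_mul_of_nonneg_right hεsmall (hM0 (k + 2))
    linarith
  -- induction
  have hind : ∀ k : ℕ, M (k + 1) ≤ (2 * C + 2) ^ (k + 1) * (2 * N) := by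
    intro k
    induction k with
    | zero =>
      have h2 : (1:ℝ) ≤ 2 * C + 2 := by linarith
      calc M 1 ≤ 2 * N := hbase
        _ ≤ (2 * C + 2) ^ 1 * (2 * N) := by nlinarith [hN0]
    | succ k ih =>
      have h1 := hstep k
      have h2 : (1:ℝ) ≤ (2 * C + 2) ^ (k + 1) := one_le_pow₀ (by linarith)
      have h3 : 2 * C * M (k + 1) ≤ 2 * C * ((2 * C + 2) ^ (k + 1) * (2 * N)) :=
        mul_le_mul_of_nonneg_left ih (by positivity)
      calc M (k + 1 + 1) ≤ 2 * N + 2 * C * M (k + 1) := h1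
        _ ≤ 2 * N + 2 * C * ((2 * C + 2) ^ (k + 1) * (2 * N)) := by linarith
        _ ≤ (2 * C + 2) ^ (k + 1 + 1) * (2 * N) := by
            have hp : (2 * C + 2) ^ (k + 1 + 1) = (2 * C + 2) ^ (k + 1) * (2 * C + 2) :=
              pow_succ _ _
            rw [hp]
            nlinarith [hN0, hC0, h2, mul_nonneg (by linarith : (0:ℝ) ≤ (2 * C + 2) ^ (k + 1) - 1) hN0]
  -- conclusion
  have hfinal : |δ t x| ≤ M (n + 1) := by
    apply hMb (n + 1) (t, x)
    refine ⟨⟨ht.1, le_min ?_ ht.2⟩, hx⟩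
    push_cast
    nlinarith [ht.2, hnε, hε0.le]
  have hzeq : z₁ t x - z₂ t x = δ t x := by
    rw [hδdef]; simp only []; rw [hw₁eq t ht x hx, hw₂eq t ht x hx]
  rw [hzeq]
  calc |δ t x| ≤ M (n + 1) := hfinal
    _ ≤ (2 * C + 2) ^ (n + 1) * (2 * N) := hind n
    _ ≤ (2 * (2 * C + 2) ^ (n + 1) + 1) * N := by
        have h2 : (1:ℝ) ≤ (2 * C + 2) ^ (n + 1) := one_le_pow₀ (by linarith)
        nlinarith [hN0]
end
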